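/- arXiv:2307.11691 — 4 statements merged into one kernel-verified Lean document; each statement's English description precedes it below -/
import Mathlib

section
/- Let p be an odd prime, m ≥ 1, and a an integer with p-adic valuation exactly 2λ, where 2λ < m. Write a = p^{2λ} b with gcd(b,p)=1. Then the number of solutions x in Z/p^m Z to x^2 ≡ a (mod p^m) equals (1 + χ(b)) · p^λ, where χ is the Legendre symbol mod p. -/
open Finset

lemma fiber_card (p : ℕ) [Fact p.Prime] (n k : ℕ) (z : ZMod (p^n)) :
    (univ.filter fun y : ZMod (p^(n+k)) => ((y.val : ℕ) : ZMod (p^n)) = z).card = p^k := by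
  haveI : NeZero (p^n) := ⟨pow_ne_zero _ (Fact.out : p.Prime).ne_zero⟩
  haveI : NeZero (p^(n+k)) := ⟨pow_ne_zero _ (Fact.out : p.Prime).ne_zero⟩
  haveI : NeZero (p^k) := ⟨pow_ne_zero _ (Fact.out : p.Prime).ne_zero⟩
  have hpn : 0 < p^n := Nat.pos_of_ne_zero (NeZero.ne _)
  have hdvd : p^n ∣ p^(n+k) := pow_dvd_pow p (Nat.le_add_right n k)
  have key : ∀ N : ℕ, ((N : ZMod (p^(n+k))).val : ZMod (p^n)) = (N : ZMod (p^n)) := by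
    intro N
    rw [ZMod.val_natCast]
    exact (ZMod.natCast_eq_natCast_iff _ _ _).mpr ((Nat.mod_modEq N (p^(n+k))).of_dvd hdvd)
  have hbound : ∀ t : ZMod (p^k), z.val + p^n * t.val < p^(n+k) := by
    intro t
    have h1 : z.val < p^n := ZMod.val_lt z
    have h2 : t.val < p^k := ZMod.val_lt t
    calc z.val + p^n * t.val < p^n * (t.val + 1) := by nlinarith
      _ ≤ p^n * p^k := Nat.mul_le_mul_left _ h2
      _ = p^(n+k) := (pow_add p n k).symm
  rw [← ZMod.card (p^k), ← Finset.card_univ]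
  refine (Finset.card_bij (fun (t : ZMod (p^k)) _ => ((z.val + p^n * t.val : ℕ) : ZMod (p^(n+k)))) ?_ ?_ ?_).symm
  · intro t _
    simp only [mem_filter, mem_univ, true_and]
    rw [key]
    push_cast
    simp [ZMod.natCast_rightInverse z,
      show ((p:ZMod (p^n)))^n = 0 by exact_mod_cast ZMod.natCast_self (p^n)]
  · intro t _ t' _ h
    have := congrArg ZMod.val h
    rw [ZMod.val_cast_of_lt (hbound t), ZMod.val_cast_of_lt (hbound t')] at this
    have : t.val = t'.val := by
      have := Nat.add_left_cancel this
      exact Nat.eq_of_mul_eq_mul_left hpn this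
    exact ZMod.val_injective _ this
  · intro y hy
    simp only [mem_filter, mem_univ, true_and] at hy
    refine ⟨((y.val / p^n : ℕ) : ZMod (p^k)), mem_univ _, ?_⟩
    have hlt : y.val / p^n < p^k := by
      apply Nat.div_lt_of_lt_mul
      rw [← pow_add]
      exact ZMod.val_lt y
    show ((z.val + p^n * ((y.val / p^n : ℕ) : ZMod (p^k)).val : ℕ) : ZMod (p^(n+k))) = y
    rw [ZMod.val_cast_of_lt hlt]
    have hz : z.val = y.val % p^n := by
      have : ((y.val : ℕ) : ZMod (p^n)) = z := hy
      rw [← this, ZMod.val_natCast]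
    rw [hz, Nat.mod_add_div]
    exact ZMod.natCast_rightInverse y

lemma card_filter_comp (p : ℕ) [Fact p.Prime] (n k : ℕ) (P : ZMod (p^n) → Prop)
    [DecidablePred P] :
    (univ.filter fun y : ZMod (p^(n+k)) => P ((y.val : ℕ) : ZMod (p^n))).card
      = p^k * (univ.filter P).card := by
  rw [Finset.card_eq_sum_card_fiberwise
    (f := fun y : ZMod (p^(n+k)) => ((y.val : ℕ) : ZMod (p^n))) (t := univ.filter P)
    (fun y hy => by simp only [Finset.mem_coe, mem_filter, mem_univ, true_and] at hy ⊢; exact hy)]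
  have : ∀ z ∈ univ.filter P,
      ((univ.filter fun y : ZMod (p^(n+k)) => P ((y.val : ℕ) : ZMod (p^n))).filter
        fun y => ((y.val : ℕ) : ZMod (p^n)) = z).card = p^k := by
    intro z hz
    simp only [mem_filter, mem_univ, true_and] at hz
    rw [Finset.filter_filter]
    have e : (univ.filter fun y : ZMod (p^(n+k)) =>
        P ((y.val : ℕ) : ZMod (p^n)) ∧ ((y.val : ℕ) : ZMod (p^n)) = z)
        = univ.filter (fun y : ZMod (p^(n+k)) => ((y.val : ℕ) : ZMod (p^n)) = z) :=
      Finset.filter_congr (fun y _ => ⟨fun h => h.2, fun h => ⟨h ▸ hz, h⟩⟩)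
    rw [e]
    exact fiber_card p n k z
  rw [Finset.sum_congr rfl this, Finset.sum_const, smul_eq_mul, mul_comm]

lemma eq_iff_dvd (p M : ℕ) (s t : ℤ) :
    ((s : ZMod (p^M)) = (t : ZMod (p^M))) ↔ (p:ℤ)^M ∣ t - s := by
  rw [ZMod.intCast_eq_intCast_iff, Int.modEq_iff_dvd]
  push_cast
  rfl

lemma hensel_step (p : ℕ) [Fact p.Prime] (hp : p ≠ 2) (n : ℕ) (hn : 1 ≤ n) (b : ℤ)
    (hb : ¬ (p:ℤ) ∣ b) :
    (univ.filter fun x : ZMod (p^(n+1)) => x^2 = (b : ZMod (p^(n+1)))).card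
      = (univ.filter fun x : ZMod (p^n) => x^2 = (b : ZMod (p^n))).card := by
  have hpp : p.Prime := Fact.out
  haveI : ∀ M : ℕ, NeZero (p^M) := fun M => ⟨pow_ne_zero _ hpp.ne_zero⟩
  have hpI : Prime (p:ℤ) := Nat.prime_iff_prime_int.mp hpp
  have hval : ∀ (M:ℕ) (x : ZMod (p^M)), ((x.val : ℤ) : ZMod (p^M)) = x := fun M x => by
    push_cast; exact ZMod.natCast_rightInverse x
  have cond : ∀ (M:ℕ) (t : ℤ),
      (((t : ZMod (p^M)))^2 = (b : ZMod (p^M))) ↔ (p:ℤ)^M ∣ t^2 - b := by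
    intro M t
    rw [show ((t : ZMod (p^M)))^2 = ((t^2 : ℤ) : ZMod (p^M)) from by push_cast; ring,
      eq_iff_dvd, dvd_sub_comm]
  have hpdvd2 : ¬ (p:ℤ) ∣ 2 := by
    intro h
    have : p ∣ 2 := by exact_mod_cast h
    exact hp ((Nat.prime_dvd_prime_iff_eq hpp Nat.prime_two).mp this)
  have hpX : ∀ X : ℤ, (p:ℤ)^n ∣ X^2 - b → ¬ (p:ℤ) ∣ X := by
    intro X hX hdvd
    apply hb
    have h1 : (p:ℤ) ∣ X^2 - b := dvd_trans (dvd_pow_self _ (by omega)) hX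
    have h2 : (p:ℤ) ∣ X^2 := by rw [sq]; exact hdvd.mul_right X
    have := dvd_sub h2 h1
    simpa using this
  refine Finset.card_bij (fun (x : ZMod (p^(n+1))) _ => ((x.val : ℕ) : ZMod (p^n))) ?_ ?_ ?_
  · intro x hx
    simp only [mem_filter, mem_univ, true_and] at hx ⊢
    rw [← hval (n+1) x] at hx
    have h1 : (p:ℤ)^(n+1) ∣ (x.val:ℤ)^2 - b := (cond (n+1) _).mp hx
    have : ((x.val : ℕ) : ZMod (p^n)) = (((x.val:ℤ)) : ZMod (p^n)) := by push_cast; rfl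
    rw [this]
    exact (cond n _).mpr (dvd_trans (pow_dvd_pow _ (by omega)) h1)
  · intro x hx x' hx' h
    simp only [mem_filter, mem_univ, true_and] at hx hx'
    set X := (x.val : ℤ) with hXdef
    set X' := (x'.val : ℤ) with hX'def
    rw [← hval (n+1) x] at hx
    rw [← hval (n+1) x'] at hx'
    have h1 : (p:ℤ)^(n+1) ∣ X^2 - b := (cond (n+1) _).mp hx
    have h2 : (p:ℤ)^(n+1) ∣ X'^2 - b := (cond (n+1) _).mp hx'
    have hred : (p:ℤ)^n ∣ X' - X := by
      rw [← eq_iff_dvd]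
      have e1 : ((X : ℤ) : ZMod (p^n)) = ((x.val : ℕ) : ZMod (p^n)) := by
        rw [hXdef]; push_cast; rfl
      have e2 : ((X' : ℤ) : ZMod (p^n)) = ((x'.val : ℕ) : ZMod (p^n)) := by
        rw [hX'def]; push_cast; rfl
      rw [e1, e2]; exact h
    obtain ⟨c, hc⟩ := hred
    have hnX : ¬ (p:ℤ) ∣ X := hpX X (dvd_trans (pow_dvd_pow _ (by omega)) h1)
    have hsum : ¬ (p:ℤ) ∣ X + X' := by
      intro hs
      have hd : (p:ℤ) ∣ X' - X := dvd_trans (dvd_pow_self _ (by omega)) ⟨c, hc⟩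
      have : (p:ℤ) ∣ 2*X := by
        have : 2*X = (X + X') - (X' - X) := by ring
        rw [this]; exact dvd_sub hs hd
      rcases hpI.dvd_mul.mp this with h' | h'
      · exact hpdvd2 h'
      · exact hnX h'
    have hkey : (p:ℤ)^(n+1) ∣ X' - X := by
      have hmul : (p:ℤ)^(n+1) ∣ (X' - X) * (X' + X) := by
        have : (X' - X) * (X' + X) = (X'^2 - b) - (X^2 - b) := by ring
        rw [this]; exact dvd_sub h2 h1
      rw [hc] at hmul
      have : (p:ℤ)^n * (p:ℤ) ∣ (p:ℤ)^n * (c * (X' + X)) := by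
        rw [← pow_succ] ; convert hmul using 1; ring
      have hpc : (p:ℤ) ∣ c * (X' + X) :=
        (mul_dvd_mul_iff_left (pow_ne_zero n hpI.ne_zero)).mp this
      rcases hpI.dvd_mul.mp hpc with h' | h'
      · rw [hc, pow_succ]
        exact mul_dvd_mul_left _ h'
      · exact absurd (by rwa [add_comm] at h') hsum
    have : ((X : ℤ) : ZMod (p^(n+1))) = ((X' : ℤ) : ZMod (p^(n+1))) :=
      (eq_iff_dvd p (n+1) X X').mpr hkey
    rw [hval (n+1) x, hval (n+1) x'] at this
    exact this
  · intro y hy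
    simp only [mem_filter, mem_univ, true_and] at hy
    set Y := (y.val : ℤ) with hYdef
    rw [← hval n y] at hy
    have h1 : (p:ℤ)^n ∣ Y^2 - b := (cond n _).mp hy
    obtain ⟨c, hc⟩ := h1
    have hnY : ¬ (p:ℤ) ∣ Y := hpX Y ⟨c, hc⟩
    have h2Y : (2 * (Y : ZMod p) : ZMod p) ≠ 0 := by
      have : ((2*Y : ℤ) : ZMod p) ≠ 0 := by
        rw [Ne, ZMod.intCast_zmod_eq_zero_iff_dvd]
        intro h'
        rcases hpI.dvd_mul.mp h' with h'' | h''
        · exact hpdvd2 h''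
        · exact hnY h''
      push_cast at this
      exact this
    set u : ZMod p := (2 * (Y : ZMod p))⁻¹ * (-(c : ZMod p)) with hu
    set U : ℤ := (u.val : ℤ) with hU
    have hucast : ((U : ℤ) : ZMod p) = u := by
      rw [hU]; push_cast; exact ZMod.natCast_rightInverse u
    have hpc : (p:ℤ) ∣ c + 2*Y*U := by
      have : ((c + 2*Y*U : ℤ) : ZMod p) = 0 := by
        push_cast
        rw [show (((U:ℤ)):ZMod p) = u from hucast]
        rw [hu]
        rw [← mul_assoc, mul_inv_cancel₀ h2Y]
        ring
      rwa [ZMod.intCast_zmod_eq_zero_iff_dvd] at this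
    set X : ℤ := Y + (p:ℤ)^n * U with hX
    have hsol : (p:ℤ)^(n+1) ∣ X^2 - b := by
      have e : X^2 - b = (p:ℤ)^n * (c + 2*Y*U) + (p:ℤ)^(2*n) * U^2 := by
        rw [hX]
        linear_combination hc
      rw [e]
      apply dvd_add
      · rw [pow_succ]
        exact mul_dvd_mul_left _ hpc
      · exact dvd_mul_of_dvd_left (pow_dvd_pow _ (by omega)) _
    refine ⟨((X : ℤ) : ZMod (p^(n+1))), ?_, ?_⟩
    · simp only [mem_filter, mem_univ, true_and]
      exact (cond (n+1) X).mpr hsol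
    · have hXv : (p:ℤ)^(n+1) ∣ ((((X : ℤ) : ZMod (p^(n+1))).val : ℤ)) - X :=
        (eq_iff_dvd p (n+1) X _).mp (hval (n+1) _).symm
      have h3 : (p:ℤ)^n ∣ ((((X : ℤ) : ZMod (p^(n+1))).val : ℤ)) - X :=
        dvd_trans (pow_dvd_pow _ (by omega)) hXv
      have hmid : (((((X : ℤ) : ZMod (p^(n+1))).val : ℤ)) : ZMod (p^n)) = ((X:ℤ) : ZMod (p^n)) :=
        ((eq_iff_dvd p n _ _).mpr h3).symm
      have hY0 : ((Y:ℤ) : ZMod (p^n)) = y := by rw [hYdef]; exact hval n y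
      have hp0 : ((p : ZMod (p^n)))^n = 0 := by exact_mod_cast ZMod.natCast_self (p^n)
      show (((((X : ℤ) : ZMod (p^(n+1))).val : ℕ)) : ZMod (p^n)) = y
      calc (((((X : ℤ) : ZMod (p^(n+1))).val : ℕ)) : ZMod (p^n))
          = (((((X : ℤ) : ZMod (p^(n+1))).val : ℤ)) : ZMod (p^n)) := by push_cast; rfl
        _ = ((X:ℤ) : ZMod (p^n)) := hmid
        _ = y := by rw [hX]; push_cast; rw [hY0, hp0]; ring

lemma aux_scale (p : ℕ) [Fact p.Prime] (lam n : ℕ) (hn : 1 ≤ n) (b : ℤ)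
    (hb : ¬ (p:ℤ) ∣ b) :
    (univ.filter fun x : ZMod (p^(n+2*lam)) =>
        x^2 = (((p:ℤ)^(2*lam)*b : ℤ) : ZMod (p^(n+2*lam)))).card
      = (univ.filter fun y : ZMod (p^(n+lam)) =>
          ((y.val : ℕ) : ZMod (p^n))^2 = (b : ZMod (p^n))).card := by
  have hpp : p.Prime := Fact.out
  haveI : ∀ M : ℕ, NeZero (p^M) := fun M => ⟨pow_ne_zero _ hpp.ne_zero⟩
  have hpI : Prime (p:ℤ) := Nat.prime_iff_prime_int.mp hpp
  have hval : ∀ (M:ℕ) (x : ZMod (p^M)), ((x.val : ℤ) : ZMod (p^M)) = x := fun M x => by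
    push_cast; exact ZMod.natCast_rightInverse x
  have cond : ∀ (M:ℕ) (t c : ℤ),
      (((t : ZMod (p^M)))^2 = ((c:ℤ) : ZMod (p^M))) ↔ (p:ℤ)^M ∣ t^2 - c := by
    intro M t c
    rw [show ((t : ZMod (p^M)))^2 = ((t^2 : ℤ) : ZMod (p^M)) from by push_cast; ring,
      eq_iff_dvd, dvd_sub_comm]
  have hsplit : ((p:ℤ))^(n+2*lam) = (p:ℤ)^(2*lam) * (p:ℤ)^n := by
    rw [← pow_add]; congr 1; omega
  refine (Finset.card_bij
    (fun (y : ZMod (p^(n+lam))) _ => (((p^lam * y.val : ℕ)) : ZMod (p^(n+2*lam)))) ?_ ?_ ?_).symm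
  · intro y hy
    simp only [mem_filter, mem_univ, true_and] at hy ⊢
    rw [show ((y.val:ℕ) : ZMod (p^n)) = (((y.val:ℤ)) : ZMod (p^n)) from by push_cast; rfl] at hy
    have hy' : (p:ℤ)^n ∣ (y.val:ℤ)^2 - b := (cond n _ b).mp hy
    rw [show (((p^lam * y.val : ℕ)) : ZMod (p^(n+2*lam)))
        = ((((p:ℤ)^lam * (y.val:ℤ)) : ℤ) : ZMod (p^(n+2*lam))) from by push_cast; rfl]
    apply (cond (n+2*lam) _ _).mpr
    rw [show ((p:ℤ)^lam * (y.val:ℤ))^2 - (p:ℤ)^(2*lam)*b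
        = (p:ℤ)^(2*lam) * ((y.val:ℤ)^2 - b) from by ring, hsplit]
    exact mul_dvd_mul_left _ hy'
  · intro y hy y' hy' h
    have h' : ((((p:ℤ)^lam * (y.val:ℤ)) : ℤ) : ZMod (p^(n+2*lam)))
        = ((((p:ℤ)^lam * (y'.val:ℤ)) : ℤ) : ZMod (p^(n+2*lam))) := by
      rw [show ((((p:ℤ)^lam * (y.val:ℤ)) : ℤ) : ZMod (p^(n+2*lam)))
          = (((p^lam * y.val : ℕ)) : ZMod (p^(n+2*lam))) from by push_cast; rfl,
        show ((((p:ℤ)^lam * (y'.val:ℤ)) : ℤ) : ZMod (p^(n+2*lam)))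
          = (((p^lam * y'.val : ℕ)) : ZMod (p^(n+2*lam))) from by push_cast; rfl]
      exact h
    have hd := (eq_iff_dvd p (n+2*lam) _ _).mp h'
    have hd2 : (p:ℤ)^lam * (p:ℤ)^(n+lam) ∣ (p:ℤ)^lam * ((y'.val:ℤ) - (y.val:ℤ)) := by
      rw [← pow_add]
      convert hd using 1
      · congr 1; omega
      · ring
    have hd3 : (p:ℤ)^(n+lam) ∣ (y'.val:ℤ) - (y.val:ℤ) :=
      (mul_dvd_mul_iff_left (pow_ne_zero lam hpI.ne_zero)).mp hd2
    have := (eq_iff_dvd p (n+lam) _ _).mpr hd3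
    rwa [hval (n+lam) y, hval (n+lam) y'] at this
  · intro x hx
    simp only [mem_filter, mem_univ, true_and] at hx
    rw [← hval (n+2*lam) x] at hx
    have h1 : (p:ℤ)^(n+2*lam) ∣ (x.val:ℤ)^2 - (p:ℤ)^(2*lam)*b := (cond (n+2*lam) _ _).mp hx
    have hdX : (p:ℤ)^(2*lam) ∣ (x.val:ℤ)^2 := by
      rw [show (x.val:ℤ)^2 = ((x.val:ℤ)^2 - (p:ℤ)^(2*lam)*b) + (p:ℤ)^(2*lam)*b from by ring]
      exact dvd_add (dvd_trans (pow_dvd_pow _ (by omega)) h1) (dvd_mul_right _ _)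
    have hpX : (p:ℤ)^lam ∣ (x.val:ℤ) := by
      have h2 : ((p:ℤ)^lam)^2 ∣ (x.val:ℤ)^2 := by
        rw [← pow_mul]
        convert hdX using 2
        omega
      exact (Int.pow_dvd_pow_iff two_ne_zero).mp h2
    have hpXn : p^lam ∣ x.val := by exact_mod_cast hpX
    have hY0 : p^lam * (x.val / p^lam) = x.val := Nat.mul_div_cancel' hpXn
    have hY0lt : x.val / p^lam < p^(n+lam) := by
      apply Nat.div_lt_of_lt_mul
      rw [← pow_add, show lam + (n+lam) = n + 2*lam from by omega]
      exact ZMod.val_lt x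
    refine ⟨(((x.val / p^lam : ℕ)) : ZMod (p^(n+lam))), ?_, ?_⟩
    · simp only [mem_filter, mem_univ, true_and]
      rw [ZMod.val_cast_of_lt hY0lt]
      have hdiff : (p:ℤ)^(2*lam) * (((x.val / p^lam : ℕ) : ℤ)^2 - b)
          = (x.val:ℤ)^2 - (p:ℤ)^(2*lam)*b := by
        have hY0' : (p:ℤ)^lam * ((x.val / p^lam : ℕ) : ℤ) = (x.val:ℤ) := by exact_mod_cast hY0
        rw [← hY0']; ring
      have h3 : (p:ℤ)^(2*lam) * (p:ℤ)^n ∣ (p:ℤ)^(2*lam) * (((x.val / p^lam : ℕ) : ℤ)^2 - b) := by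
        rw [hdiff, ← hsplit]; exact h1
      have h4 : (p:ℤ)^n ∣ ((x.val / p^lam : ℕ) : ℤ)^2 - b :=
        (mul_dvd_mul_iff_left (pow_ne_zero (2*lam) hpI.ne_zero)).mp h3
      rw [show (((x.val / p^lam : ℕ)) : ZMod (p^n)) = ((((x.val / p^lam : ℕ) : ℤ)) : ZMod (p^n))
          from (Int.cast_natCast _).symm]
      exact (cond n _ b).mpr h4
    · show ((p^lam * (((x.val / p^lam : ℕ)) : ZMod (p^(n+lam))).val : ℕ) : ZMod (p^(n+2*lam))) = x
      rw [ZMod.val_cast_of_lt hY0lt, hY0]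
      exact ZMod.natCast_rightInverse x

lemma card_congr_mod (M N : ℕ) [NeZero M] [NeZero N] (h : M = N) (b : ℤ) :
    (univ.filter fun x : ZMod M => x^2 = (b : ZMod M)).card
      = (univ.filter fun x : ZMod N => x^2 = (b : ZMod N)).card := by subst h; rfl

lemma aux_unit (p : ℕ) [Fact p.Prime] (hp : p ≠ 2) (b : ℤ) (hb : ¬ (p:ℤ) ∣ b) :
    ∀ n : ℕ, 1 ≤ n →
    (univ.filter fun x : ZMod (p^n) => x^2 = (b : ZMod (p^n))).card
      = (univ.filter fun x : ZMod p => x^2 = (b : ZMod p)).card := by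
  intro n hn
  induction n with
  | zero => omega
  | succ k ih =>
    rcases Nat.eq_zero_or_pos k with hk | hk
    · subst hk
      haveI : NeZero (p^(0+1)) := ⟨pow_ne_zero _ (Fact.out : p.Prime).ne_zero⟩
      haveI : NeZero p := ⟨(Fact.out : p.Prime).ne_zero⟩
      exact card_congr_mod (p^(0+1)) p (by norm_num) b
    · rw [hensel_step p hp k hk b hb]
      exact ih hk

theorem stmt_5 (p : ℕ) [Fact p.Prime] (hp : p ≠ 2) (m : ℕ) (hm : 1 ≤ m)
    (a b : ℤ) (lam : ℕ) (hab : a = (p : ℤ) ^ (2 * lam) * b)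
    (hb : ¬ (p : ℤ) ∣ b) (hlt : 2 * lam < m) :
    ((Finset.univ.filter fun x : ZMod (p ^ m) => x ^ 2 = (a : ZMod (p ^ m))).card : ℤ)
      = (1 + legendreSym p b) * (p : ℤ) ^ lam := by
  subst hab
  obtain ⟨n, hn1, rfl⟩ : ∃ n, 1 ≤ n ∧ m = n + 2*lam := ⟨m - 2*lam, by omega, by omega⟩
  rw [aux_scale p lam n hn1 b hb]
  rw [card_filter_comp p n lam (fun z : ZMod (p^n) => z^2 = (b : ZMod (p^n)))]
  rw [aux_unit p hp b hb n hn1]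
  have hcard : (((univ.filter fun x : ZMod p => x^2 = (b : ZMod p)).card : ℕ) : ℤ)
      = legendreSym p b + 1 := by
    rw [← legendreSym.card_sqrts p hp b]
    congr 1
    rw [Set.toFinset_setOf]
  push_cast
  rw [hcard]
  ring
end

section
/- Let p be an odd prime and m ≥ 1. For every k in Z/p^m Z, the number of triples (x,y,z) in (Z/p^m Z)^3 with x^2 + y^2 + z^2 ≡ k (mod p^m) is divisible by p^m. -/
open Finset

/-- If a finset `S` is closed under translation by every element of a finset `H` which is
closed under the additive group operations, then `#H ∣ #S`. -/
lemma coset_card_dvd {α : Type*} [DecidableEq α] [AddCommGroup α] (H : Finset α)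
    (h0 : (0 : α) ∈ H) (hadd : ∀ a ∈ H, ∀ b ∈ H, a + b ∈ H)
    (hneg : ∀ a ∈ H, -a ∈ H) :
    ∀ n : ℕ, ∀ S : Finset α, S.card = n → (∀ s ∈ S, ∀ t ∈ H, s + t ∈ S) → H.card ∣ S.card := by
  intro n
  induction n using Nat.strong_induction_on with
  | _ n ih =>
    rintro S rfl hS
    rcases S.eq_empty_or_nonempty with rfl | ⟨s, hs⟩
    · simp
    · set C : Finset α := H.image (fun t => s + t) with hC
      have hCS : C ⊆ S := by
        intro x hx
        simp only [hC, mem_image] at hx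
        obtain ⟨t, ht, rfl⟩ := hx
        exact hS s hs t ht
      have hCcard : C.card = H.card :=
        Finset.card_image_of_injective _ (add_right_injective s)
      have hHpos : 0 < H.card := Finset.card_pos.mpr ⟨0, h0⟩
      have hle : H.card ≤ S.card := hCcard ▸ Finset.card_le_card hCS
      have hsub : (S \ C).card = S.card - H.card := by
        rw [Finset.card_sdiff_of_subset hCS, hCcard]
      have hlt : (S \ C).card < S.card := by omega
      have hinv : ∀ x ∈ S \ C, ∀ t ∈ H, x + t ∈ S \ C := by
        intro x hx t ht
        rw [Finset.mem_sdiff] at hx ⊢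
        refine ⟨hS x hx.1 t ht, fun hmem => hx.2 ?_⟩
        simp only [hC, mem_image] at hmem ⊢
        obtain ⟨t', ht', heq⟩ := hmem
        refine ⟨t' + -t, hadd t' ht' _ (hneg t ht), ?_⟩
        rw [← add_assoc, heq]
        abel
      have hdvd := ih (S \ C).card hlt (S \ C) rfl hinv
      have hcards : S.card = (S \ C).card + H.card := by omega
      obtain ⟨d, hd⟩ := hdvd
      exact ⟨d + 1, by rw [hcards, hd]; ring⟩

/-- Key counting lemma: for any `u c : ZMod n`, the number of pairs `(v, w)` with
`u * v = c + w ^ 2` is divisible by `n`. -/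
lemma key_count {n : ℕ} [NeZero n] (u c : ZMod n) :
    n ∣ (Finset.univ.filter fun vw : ZMod n × ZMod n => u * vw.1 = c + vw.2 ^ 2).card := by
  classical
  set ug : Finset (ZMod n) := Finset.univ.image (fun v => u * v) with hug
  set k0 : ℕ := (Finset.univ.filter fun v : ZMod n => u * v = 0).card with hk0
  have fiber_card : ∀ c' ∈ ug, (Finset.univ.filter fun v : ZMod n => u * v = c').card = k0 := by
    intro c' hc'
    simp only [hug, mem_image, mem_univ, true_and] at hc'
    obtain ⟨v₀, hv₀⟩ := hc'
    rw [hk0]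
    apply Finset.card_nbij' (fun v => v - v₀) (fun v => v + v₀)
    · intro v hv
      simp only [mem_coe, mem_filter, mem_univ, true_and] at hv ⊢
      rw [mul_sub, hv, hv₀, sub_self]
    · intro v hv
      simp only [mem_coe, mem_filter, mem_univ, true_and] at hv ⊢
      rw [mul_add, hv, hv₀, zero_add]
    · intro v _; simp
    · intro v _; simp
  have huniv : n = ug.card * k0 := by
    have h1 : (Finset.univ : Finset (ZMod n)).card
        = ∑ c' ∈ ug, (Finset.univ.filter fun v : ZMod n => u * v = c').card :=
      Finset.card_eq_sum_card_fiberwise (fun v _ => Finset.mem_image_of_mem _ (mem_univ v))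
    rw [Finset.card_univ, ZMod.card] at h1
    exact h1.trans ((Finset.sum_congr rfl fiber_card).trans
      (by rw [Finset.sum_const, smul_eq_mul]))
  set W : Finset (ZMod n) := Finset.univ.filter (fun w => c + w ^ 2 ∈ ug) with hW
  have main : (Finset.univ.filter fun vw : ZMod n × ZMod n => u * vw.1 = c + vw.2 ^ 2).card
      = k0 * W.card := by
    have h1 : (Finset.univ.filter fun vw : ZMod n × ZMod n => u * vw.1 = c + vw.2 ^ 2).card
        = ∑ w : ZMod n, ((Finset.univ.filter fun vw : ZMod n × ZMod n =>
            u * vw.1 = c + vw.2 ^ 2).filter fun vw => vw.2 = w).card :=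
      Finset.card_eq_sum_card_fiberwise (fun v _ => mem_univ _)
    have h2 : ∀ w : ZMod n, ((Finset.univ.filter fun vw : ZMod n × ZMod n =>
        u * vw.1 = c + vw.2 ^ 2).filter fun vw => vw.2 = w).card
        = (Finset.univ.filter fun v : ZMod n => u * v = c + w ^ 2).card := by
      intro w
      apply Finset.card_nbij' (fun vw => vw.1) (fun v => (v, w))
      · rintro ⟨v, w'⟩ hv
        simp only [mem_coe, mem_filter, mem_univ, true_and] at hv ⊢
        obtain ⟨h3, rfl⟩ := hv
        exact h3
      · intro v hv
        simp only [mem_coe, mem_filter, mem_univ, true_and] at hv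
        exact Finset.mem_filter.mpr ⟨Finset.mem_filter.mpr ⟨mem_univ _, hv⟩, rfl⟩
      · rintro ⟨v, w'⟩ hv
        simp only [mem_coe, mem_filter, mem_univ, true_and] at hv
        obtain ⟨-, rfl⟩ := hv
        rfl
      · intro v _; rfl
    have h3 : ∀ w : ZMod n, (Finset.univ.filter fun v : ZMod n => u * v = c + w ^ 2).card
        = if c + w ^ 2 ∈ ug then k0 else 0 := by
      intro w
      by_cases hw : c + w ^ 2 ∈ ug
      · rw [if_pos hw]; exact fiber_card _ hw
      · rw [if_neg hw, Finset.card_eq_zero, Finset.filter_eq_empty_iff]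
        intro v _ hv
        exact hw (by rw [← hv]; exact Finset.mem_image_of_mem _ (mem_univ v))
    rw [h1]
    calc ∑ w : ZMod n, ((Finset.univ.filter fun vw : ZMod n × ZMod n =>
            u * vw.1 = c + vw.2 ^ 2).filter fun vw => vw.2 = w).card
        = ∑ w : ZMod n, if c + w ^ 2 ∈ ug then k0 else 0 :=
          Finset.sum_congr rfl (fun w _ => (h2 w).trans (h3 w))
      _ = ∑ w ∈ W, k0 := (Finset.sum_filter _ _).symm
      _ = k0 * W.card := by rw [Finset.sum_const, smul_eq_mul, mul_comm]
  have hdvd : ug.card ∣ W.card := by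
    refine coset_card_dvd ug ?_ ?_ ?_ W.card W rfl ?_
    · exact Finset.mem_image.mpr ⟨0, mem_univ 0, mul_zero u⟩
    · rintro a ha b hb
      simp only [hug, mem_image, mem_univ, true_and] at ha hb ⊢
      obtain ⟨v₁, rfl⟩ := ha; obtain ⟨v₂, rfl⟩ := hb
      exact ⟨v₁ + v₂, by ring⟩
    · rintro a ha
      simp only [hug, mem_image, mem_univ, true_and] at ha ⊢
      obtain ⟨v₁, rfl⟩ := ha
      exact ⟨-v₁, by ring⟩
    · intro w hw t ht
      simp only [hW, mem_filter, mem_univ, true_and] at hw ⊢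
      simp only [hug, mem_image, mem_univ, true_and] at hw ht ⊢
      obtain ⟨v₁, hv₁⟩ := hw
      obtain ⟨v₂, hv₂⟩ := ht
      refine ⟨v₁ + (2 * w + t) * v₂, ?_⟩
      rw [mul_add]
      rw [hv₁]
      rw [mul_comm u ((2 * w + t) * v₂), mul_assoc, mul_comm v₂ u, hv₂]
      ring
  obtain ⟨d, hd⟩ := hdvd
  refine ⟨d, ?_⟩
  rw [main]
  calc k0 * W.card = ug.card * k0 * d := by rw [hd]; ring
    _ = n * d := by rw [← huniv]

lemma int_sum_sq (p : ℕ) [Fact p.Prime] (hp : p ≠ 2) :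
    ∀ n : ℕ, 1 ≤ n → ∃ A B : ℤ, ¬ (p : ℤ) ∣ A ∧ (p : ℤ) ^ n ∣ (A ^ 2 + B ^ 2 + 1) := by
  have pp : p.Prime := Fact.out
  have hpd2 : ¬ p ∣ 2 := fun h =>
    hp ((Nat.prime_dvd_prime_iff_eq pp Nat.prime_two).mp h)
  intro n hn
  induction n with
  | zero => omega
  | succ n ih =>
    rcases Nat.eq_zero_or_pos n with rfl | hn'
    · obtain ⟨a, b, hab⟩ := ZMod.sq_add_sq p (-1)
      have hne : a ≠ 0 ∨ b ≠ 0 := by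
        by_contra h
        push_neg at h
        rw [h.1, h.2] at hab
        have h0 : (0 : ZMod p) = -1 := by linear_combination hab
        exact one_ne_zero (by linear_combination h0 : (1 : ZMod p) = 0)
      have key : ∀ a b : ZMod p, a ^ 2 + b ^ 2 = -1 → a ≠ 0 →
          ∃ A B : ℤ, ¬ (p : ℤ) ∣ A ∧ (p : ℤ) ^ 1 ∣ (A ^ 2 + B ^ 2 + 1) := by
        intro a b hab ha
        refine ⟨(a.val : ℤ), (b.val : ℤ), ?_, ?_⟩
        · rw [← ZMod.intCast_zmod_eq_zero_iff_dvd]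
          push_cast
          rw [ZMod.natCast_val, ZMod.cast_id]
          exact ha
        · rw [pow_one, ← ZMod.intCast_zmod_eq_zero_iff_dvd]
          push_cast
          rw [ZMod.natCast_val, ZMod.cast_id, ZMod.natCast_val, ZMod.cast_id, hab]
          ring
      rcases hne with ha | hb
      · exact key a b hab ha
      · exact key b a (by rw [← hab]; ring) hb
    · obtain ⟨A, B, hA, hd⟩ := ih hn'
      obtain ⟨s, hs⟩ := hd
      obtain ⟨n, rfl⟩ : ∃ n', n = n' + 1 := ⟨n - 1, by omega⟩
      have h2 : (2 : ZMod p) ≠ 0 := by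
        intro h
        have h' : ((2 : ℕ) : ZMod p) = 0 := by exact_mod_cast h
        rw [ZMod.natCast_eq_zero_iff] at h'
        exact hpd2 h'
      have hAz : ((A : ℤ) : ZMod p) ≠ 0 := by
        rw [Ne, ZMod.intCast_zmod_eq_zero_iff_dvd]
        exact hA
      set e : ZMod p := ((2 * A : ℤ) : ZMod p) with he
      have hez : e ≠ 0 := by
        rw [he]; push_cast; exact mul_ne_zero h2 hAz
      set t : ℤ := (((-(s : ZMod p)) * e⁻¹).val : ℤ) with ht
      have htc : ((t : ℤ) : ZMod p) = (-(s : ZMod p)) * e⁻¹ := by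
        rw [ht]; push_cast; rw [ZMod.natCast_val, ZMod.cast_id]
      have hst : (p : ℤ) ∣ s + 2 * A * t := by
        rw [← ZMod.intCast_zmod_eq_zero_iff_dvd]
        push_cast
        have h1 : (2 : ZMod p) * (A : ZMod p) * ((t : ℤ) : ZMod p)
            = e * ((-(s : ZMod p)) * e⁻¹) := by
          rw [htc, he]; push_cast; ring
        rw [h1, mul_comm (-(s : ZMod p)) e⁻¹, ← mul_assoc, mul_comm e e⁻¹,
          inv_mul_cancel₀ hez]
        ring
      obtain ⟨r, hr⟩ := hst
      refine ⟨A + t * (p : ℤ) ^ (n + 1), B, ?_, ?_⟩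
      · intro h
        apply hA
        have h2' : (p : ℤ) ∣ t * (p : ℤ) ^ (n + 1) := ⟨t * (p : ℤ) ^ n, by ring⟩
        have := dvd_sub h h2'
        simpa using this
      · exact ⟨r + t ^ 2 * (p : ℤ) ^ n, by linear_combination hs + (p : ℤ) ^ (n + 1) * hr⟩

lemma neg_one_sum_sq (p : ℕ) [Fact p.Prime] (hp : p ≠ 2) (m : ℕ) (hm : 1 ≤ m) :
    ∃ a b : ZMod (p ^ m), a ^ 2 + b ^ 2 = -1 := by
  obtain ⟨A, B, -, hd⟩ := int_sum_sq p hp m hm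
  refine ⟨(A : ZMod (p ^ m)), (B : ZMod (p ^ m)), ?_⟩
  have h0 : ((A ^ 2 + B ^ 2 + 1 : ℤ) : ZMod (p ^ m)) = 0 := by
    rw [ZMod.intCast_zmod_eq_zero_iff_dvd]
    exact_mod_cast hd
  push_cast at h0
  linear_combination h0

theorem stmt_11 (p : ℕ) [Fact p.Prime] (hp : p ≠ 2) (m : ℕ) (hm : 1 ≤ m)
    (k : ZMod (p ^ m)) :
    p ^ m ∣ (Finset.univ.filter fun v : ZMod (p ^ m) × ZMod (p ^ m) × ZMod (p ^ m) =>
      v.1 ^ 2 + v.2.1 ^ 2 + v.2.2 ^ 2 = k).card := by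
  classical
  have pp : p.Prime := Fact.out
  haveI : NeZero (p ^ m) := ⟨pow_ne_zero m pp.ne_zero⟩
  obtain ⟨a, b, hab⟩ := neg_one_sum_sq p hp m hm
  have h2u : IsUnit (2 : ZMod (p ^ m)) := by
    have hc : ((2 : ℕ) : ZMod (p ^ m)) = 2 := by push_cast; ring
    rw [← hc, ZMod.isUnit_iff_coprime]
    exact Nat.Coprime.pow_right m ((Nat.coprime_primes Nat.prime_two pp).mpr (Ne.symm hp))
  obtain ⟨i2, hi2⟩ := h2u.exists_right_inv
  -- hi2 : 2 * i2 = 1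
  have hcard : (Finset.univ.filter fun v : ZMod (p ^ m) × ZMod (p ^ m) × ZMod (p ^ m) =>
        v.1 ^ 2 + v.2.1 ^ 2 + v.2.2 ^ 2 = k).card
      = (Finset.univ.filter fun v : ZMod (p ^ m) × ZMod (p ^ m) × ZMod (p ^ m) =>
        4 * v.1 * v.2.1 = k + v.2.2 ^ 2).card := by
    apply Finset.card_nbij'
      (fun v => (i2 * (v.2.2 - (a * v.1 + b * v.2.1)),
                 i2 * (v.2.2 + (a * v.1 + b * v.2.1)),
                 a * v.2.1 - b * v.1))
      (fun v => (a * v.1 - a * v.2.1 + b * v.2.2,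
                 b * v.1 - b * v.2.1 - a * v.2.2,
                 v.1 + v.2.1))
    · rintro ⟨x, y, z⟩ hv
      simp only [mem_coe, mem_filter, mem_univ, true_and] at hv ⊢
      linear_combination hv - (x ^ 2 + y ^ 2) * hab
        + (2 * i2 + 1) * (z ^ 2 - (a * x + b * y) ^ 2) * hi2
    · rintro ⟨u, v, w⟩ hv
      simp only [mem_coe, mem_filter, mem_univ, true_and] at hv ⊢
      linear_combination hv + ((u - v) ^ 2 + w ^ 2) * hab
    · rintro ⟨x, y, z⟩ hv
      simp only [Prod.mk.injEq]
      refine ⟨?_, ?_, ?_⟩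
      · linear_combination (-x) * hab - a * (a * x + b * y) * hi2
      · linear_combination (-y) * hab - b * (a * x + b * y) * hi2
      · linear_combination z * hi2
    · rintro ⟨u, v, w⟩ hv
      simp only [Prod.mk.injEq]
      refine ⟨?_, ?_, ?_⟩
      · linear_combination u * hi2 - i2 * (u - v) * hab
      · linear_combination v * hi2 + i2 * (u - v) * hab
      · linear_combination (-w) * hab
  rw [hcard]
  have hsum : (Finset.univ.filter fun v : ZMod (p ^ m) × ZMod (p ^ m) × ZMod (p ^ m) =>
        4 * v.1 * v.2.1 = k + v.2.2 ^ 2).card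
      = ∑ u : ZMod (p ^ m), (Finset.univ.filter fun vw : ZMod (p ^ m) × ZMod (p ^ m) =>
        4 * u * vw.1 = k + vw.2 ^ 2).card := by
    have h1 : (Finset.univ.filter fun v : ZMod (p ^ m) × ZMod (p ^ m) × ZMod (p ^ m) =>
        4 * v.1 * v.2.1 = k + v.2.2 ^ 2).card
        = ∑ u : ZMod (p ^ m), ((Finset.univ.filter fun v : ZMod (p ^ m) × ZMod (p ^ m) × ZMod (p ^ m) =>
          4 * v.1 * v.2.1 = k + v.2.2 ^ 2).filter fun v => v.1 = u).card :=
      Finset.card_eq_sum_card_fiberwise (fun v _ => mem_univ _)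
    rw [h1]
    refine Finset.sum_congr rfl (fun u _ => ?_)
    apply Finset.card_nbij' (fun v => v.2) (fun vw => (u, vw))
    · rintro ⟨u', v, w⟩ hv
      simp only [mem_coe, mem_filter, mem_univ, true_and] at hv ⊢
      obtain ⟨h3, rfl⟩ := hv
      exact h3
    · rintro ⟨v, w⟩ hv
      simp only [mem_coe, mem_filter, mem_univ, true_and] at hv
      exact Finset.mem_filter.mpr ⟨Finset.mem_filter.mpr ⟨mem_univ _, hv⟩, rfl⟩
    · rintro ⟨u', v, w⟩ hv
      simp only [mem_coe, mem_filter, mem_univ, true_and] at hv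
      obtain ⟨-, rfl⟩ := hv
      rfl
    · rintro ⟨v, w⟩ _
      rfl
  rw [hsum]
  exact Finset.dvd_sum (fun u _ => key_count (4 * u) k)
end

section
/- For every m ≥ 1 and every k in Z/2^m Z, the number of pairs (x,y) in (Z/2^m Z)^2 with x^2 + y^2 ≡ k (mod 2^m) is divisible by 2^m. -/
open Finset

set_option maxHeartbeats 1200000


lemma rc (d n a : ℕ) (ha : a < d) :
    (((range (d * n)).filter (fun x => x % d = a)).card) = n := by
  have hd : 0 < d := by omega
  have hcomm : d * n = n * d := Nat.mul_comm d n
  have h : (range (d * n)).filter (fun x => x % d = a)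
      = (range n).image (fun q => q * d + a) := by
    ext x
    simp only [mem_filter, mem_range, mem_image]
    constructor
    · rintro ⟨hx, hm⟩
      refine ⟨x / d, ?_, ?_⟩
      · rw [Nat.div_lt_iff_lt_mul hd]; omega
      · have h2 := Nat.div_add_mod' x d
        omega
    · rintro ⟨q, hq, rfl⟩
      refine ⟨?_, ?_⟩
      · have h3 : (q+1) * d ≤ n * d := Nat.mul_le_mul_right d hq
        rw [add_mul, one_mul] at h3
        omega
      · rw [add_comm, Nat.add_mul_mod_self_right, Nat.mod_eq_of_lt ha]
  rw [h, card_image_of_injective _ ?_, card_range]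
  intro x y hxy
  simp only at hxy
  exact Nat.eq_of_mul_eq_mul_right hd (by omega)

lemma transfer (n : ℕ) [NeZero n] (p : ℕ → Prop) [DecidablePred p] :
    (univ.filter fun z : ZMod n => p z.val).card = ((range n).filter p).card := by
  refine Finset.card_nbij' (fun z => z.val) (fun a => (a : ZMod n)) ?_ ?_ ?_ ?_
  · intro z hz
    simp only [Finset.mem_coe, mem_filter, mem_range] at *
    exact ⟨ZMod.val_lt z, hz.2⟩
  · intro a ha
    simp only [Finset.mem_coe, mem_filter, mem_range] at ha
    refine mem_filter.2 ⟨mem_univ _, ?_⟩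
    show p ((a : ZMod n)).val
    rw [ZMod.val_natCast, Nat.mod_eq_of_lt ha.1]
    exact ha.2
  · intro z hz; simp [ZMod.natCast_val, ZMod.cast_id]
  · intro a ha
    simp only [Finset.mem_coe, mem_filter, mem_range] at ha
    show ((a : ZMod n)).val = a
    rw [ZMod.val_natCast, Nat.mod_eq_of_lt ha.1]


lemma int_key (M : ℕ) (a b : ℤ) (ha : a % 2 = 1) (hb : b % 2 = 1)
    (h : (2:ℤ)^(M+3) ∣ b^2 - a^2) :
    (2:ℤ)^(M+2) ∣ (b - a) ∨ (2:ℤ)^(M+2) ∣ (b + a) := by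
  obtain ⟨s, hs⟩ : (2:ℤ) ∣ (b - a) := by omega
  obtain ⟨t, ht⟩ : (2:ℤ) ∣ (b + a) := by omega
  have h4 : (2:ℤ)^(M+1) ∣ s * t := by
    have h1 : b^2 - a^2 = 4 * (s * t) := by
      have e1 : b^2 - a^2 = (b - a) * (b + a) := by ring
      rw [e1, hs, ht]; ring
    rw [h1] at h
    have h2 : (2:ℤ)^(M+3) = 4 * 2^(M+1) := by ring
    rw [h2] at h
    exact (mul_dvd_mul_iff_left (by norm_num : (4:ℤ) ≠ 0)).1 h
  rcases Int.even_or_odd s with he | ho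
  · have hto : t % 2 = 1 := by obtain ⟨c, hc⟩ := he; omega
    have hcop : IsCoprime ((2:ℤ)^(M+1)) t := by
      apply IsCoprime.pow_left
      rw [Int.prime_two.coprime_iff_not_dvd]
      omega
    left
    obtain ⟨u, hu⟩ := hcop.dvd_of_dvd_mul_right h4
    exact ⟨u, by rw [hs, hu]; ring⟩
  · have hcop : IsCoprime ((2:ℤ)^(M+1)) s := by
      apply IsCoprime.pow_left
      rw [Int.prime_two.coprime_iff_not_dvd]
      obtain ⟨c, hc⟩ := ho; omega
    right
    obtain ⟨u, hu⟩ := hcop.dvd_of_dvd_mul_left h4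
    exact ⟨u, by rw [ht, hu]; ring⟩

lemma roots_card (n : ℕ) (x₀ : ZMod (2^(n+3))) (hx : x₀.val % 2 = 1) :
    (univ.filter fun z : ZMod (2^(n+3)) => z.val % 2 = 1 ∧ z^2 = x₀^2).card = 4 := by
  haveI : NeZero (2^(n+3)) := ⟨by positivity⟩
  have hp0 : 0 < 2^n := by positivity
  have hNval : (2:ℕ)^(n+3) = 2 * 2^(n+2) := by ring
  have hN8 : (2:ℕ)^(n+3) = 8 * 2^n := by ring
  have hK4 : (2:ℕ)^(n+2) = 4 * 2^n := by ring
  set H : ZMod (2^(n+3)) := ((2^(n+2) : ℕ) : ZMod (2^(n+3))) with hH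
  have hHval : H.val = 2^(n+2) := ZMod.val_cast_of_lt (by omega)
  have h2H : H + H = 0 := by
    rw [hH, ← Nat.cast_add]
    have e : (2:ℕ)^(n+2) + 2^(n+2) = 2^(n+3) := by ring
    rw [e, ZMod.natCast_self]
  have hH2 : H * H = 0 := by
    rw [hH, ← Nat.cast_mul]
    have e : (2:ℕ)^(n+2) * 2^(n+2) = 2^(n+3) * 2^(n+1) := by ring
    rw [e, Nat.cast_mul, ZMod.natCast_self, zero_mul]
  have hsq : ∀ s : ZMod (2^(n+3)), (s + H)^2 = s^2 := by
    intro s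
    have e : (s + H)^2 = s^2 + (H + H) * s + H * H := by ring
    rw [e, h2H, hH2, zero_mul, add_zero, add_zero]
  have hx0 : x₀ ≠ 0 := by
    intro h0; rw [h0] at hx; simp at hx
  have hb := ZMod.val_lt x₀
  have hnegval : (-x₀).val = 2^(n+3) - x₀.val := by rw [ZMod.neg_val, if_neg hx0]
  have hmod2 : ∀ c : ℕ, (c % 2^(n+3)) % 2 = c % 2 :=
    fun c => Nat.mod_mod_of_dvd c (by omega)
  have hoddH : (x₀ + H).val % 2 = 1 := by
    rw [ZMod.val_add, hHval, hmod2]; omega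
  have hoddneg : (-x₀).val % 2 = 1 := by rw [hnegval]; omega
  have hoddnegH : (-x₀ + H).val % 2 = 1 := by
    rw [ZMod.val_add, hHval, hmod2, hnegval]
    have : x₀.val ≤ 2^(n+3) := le_of_lt hb
    omega
  have hH0 : H ≠ 0 := by
    intro h0
    have h1 := hHval
    rw [h0, ZMod.val_zero] at h1
    omega
  have hnegH : -H = H := neg_eq_of_add_eq_zero_left h2H
  have hvadd : (x₀ + x₀).val = (x₀.val + x₀.val) % 2^(n+3) := ZMod.val_add x₀ x₀
  have hmodcase : (x₀.val + x₀.val) % 2^(n+3) = x₀.val + x₀.val ∨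
      ((x₀.val + x₀.val) % 2^(n+3) = x₀.val + x₀.val - 2^(n+3) ∧ 2^(n+3) ≤ x₀.val + x₀.val) := by
    rcases Nat.lt_or_ge (x₀.val + x₀.val) (2^(n+3)) with h | h
    · exact Or.inl (Nat.mod_eq_of_lt h)
    · exact Or.inr ⟨by rw [Nat.mod_eq_sub_mod h]; exact Nat.mod_eq_of_lt (by omega), h⟩
  have h2x : x₀ + x₀ ≠ 0 := by
    intro h0
    have h1 : (x₀ + x₀).val = 0 := by rw [h0]; simp
    rw [hvadd] at h1
    rcases hmodcase with hm | ⟨hm, hge⟩ <;> rw [hm] at h1 <;> omega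
  have h2xH : x₀ + x₀ ≠ H := by
    intro h0
    have h1 : (x₀ + x₀).val = 2^(n+2) := by rw [h0, hHval]
    rw [hvadd] at h1
    rcases hmodcase with hm | ⟨hm, hge⟩ <;> rw [hm] at h1 <;> omega
  have d13 : x₀ ≠ -x₀ := fun h0 => h2x (by linear_combination h0)
  have d12 : x₀ ≠ x₀ + H := fun h0 => hH0 (by linear_combination - h0)
  have d14 : x₀ ≠ -x₀ + H := fun h0 => h2xH (by linear_combination h0)
  have d23 : x₀ + H ≠ -x₀ := by
    intro h0
    have e : x₀ + x₀ = -H := by linear_combination h0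
    rw [hnegH] at e
    exact h2xH e
  have d24 : x₀ + H ≠ -x₀ + H := fun h0 => d13 (by linear_combination h0)
  have d34 : (-x₀ : ZMod (2^(n+3))) ≠ -x₀ + H := fun h0 => hH0 (by linear_combination - h0)
  -- the filter is the explicit four-element set
  have hset : (univ.filter fun z : ZMod (2^(n+3)) => z.val % 2 = 1 ∧ z^2 = x₀^2)
      = {x₀, x₀ + H, -x₀, -x₀ + H} := by
    ext z
    simp only [mem_filter, mem_univ, true_and, mem_insert, mem_singleton]
    constructor
    · rintro ⟨hz1, hz2⟩
      -- lift to integers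
      have hzc : ((z.val : ℕ) : ZMod (2^(n+3))) = z := by
        rw [ZMod.natCast_val, ZMod.cast_id]
      have hxc : ((x₀.val : ℕ) : ZMod (2^(n+3))) = x₀ := by
        rw [ZMod.natCast_val, ZMod.cast_id]
      have hcast : ((z.val^2 : ℕ) : ZMod (2^(n+3))) = ((x₀.val^2 : ℕ) : ZMod (2^(n+3))) := by
        push_cast
        rw [hzc, hxc, hz2]
      have hmodeq : z.val^2 ≡ x₀.val^2 [MOD 2^(n+3)] :=
        (ZMod.natCast_eq_natCast_iff _ _ _).1 hcast
      have hdvd : ((2:ℤ))^(n+3) ∣ (x₀.val : ℤ)^2 - (z.val : ℤ)^2 := by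
        have h5 := (Nat.modEq_iff_dvd).1 hmodeq
        push_cast at h5
        exact h5
      have hza : (z.val : ℤ) % 2 = 1 := by omega
      have hxa : (x₀.val : ℤ) % 2 = 1 := by omega
      have hHmul : ∀ e : ℤ, H * (e : ZMod (2^(n+3))) = 0 ∨ H * (e : ZMod (2^(n+3))) = H := by
        intro e
        rcases Int.even_or_odd e with ⟨c, hc⟩ | ⟨c, hc⟩
        · left; rw [hc]; push_cast; rw [show H * ((c:ZMod (2^(n+3))) + c) = (H + H) * c by ring,
            h2H, zero_mul]
        · right; rw [hc]; push_cast
          rw [show H * (2*(c:ZMod (2^(n+3))) + 1) = (H + H) * c + H by ring, h2H, zero_mul, zero_add]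
      have hHcast : ∀ e : ℤ, (((2^(n+2) * e : ℤ)) : ZMod (2^(n+3))) = H * (e : ZMod (2^(n+3))) := by
        intro e; push_cast [hH]; ring
      rcases int_key n (z.val : ℤ) (x₀.val : ℤ) hza hxa hdvd with ⟨e, he⟩ | ⟨e, he⟩
      · -- x₀ - z = H * e
        have e1 : x₀ - z = H * (e : ZMod (2^(n+3))) := by
          rw [← hHcast]
          rw [← he]
          push_cast
          rw [hzc, hxc]
        rcases hHmul e with h0 | h0
        · rw [h0] at e1; left; linear_combination - e1
        · rw [h0] at e1; right; left
          rw [show x₀ + H = x₀ - H by linear_combination h2H]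
          linear_combination - e1
      · -- x₀ + z = H * e
        have e1 : x₀ + z = H * (e : ZMod (2^(n+3))) := by
          rw [← hHcast, ← he]
          push_cast
          rw [hzc, hxc]
        rcases hHmul e with h0 | h0
        · rw [h0] at e1; right; right; left; linear_combination e1
        · rw [h0] at e1; right; right; right; linear_combination e1
    · rintro (rfl | rfl | rfl | rfl)
      · exact ⟨hx, rfl⟩
      · exact ⟨hoddH, hsq x₀⟩
      · exact ⟨hoddneg, by ring⟩
      · exact ⟨hoddnegH, by rw [hsq (-x₀)]; ring⟩
  rw [hset]
  have m1 : x₀ ∉ ({x₀ + H, -x₀, -x₀ + H} : Finset (ZMod (2^(n+3)))) := by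
    simp only [mem_insert, mem_singleton]
    push_neg
    exact ⟨d12, d13, d14⟩
  have m2 : x₀ + H ∉ ({-x₀, -x₀ + H} : Finset (ZMod (2^(n+3)))) := by
    simp only [mem_insert, mem_singleton]
    push_neg
    exact ⟨d23, d24⟩
  have m3 : (-x₀ : ZMod (2^(n+3))) ∉ ({-x₀ + H} : Finset (ZMod (2^(n+3)))) := by
    simp only [mem_singleton]
    exact d34
  rw [card_insert_of_notMem m1, card_insert_of_notMem m2, card_insert_of_notMem m3,
    card_singleton]

def pi8 (n : ℕ) : ZMod (2^(n+3)) →+* ZMod 8 :=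
  ZMod.castHom (show (8:ℕ) ∣ 2^(n+3) from ⟨2^n, by ring⟩) (ZMod 8)

lemma pi8_val (n : ℕ) (z : ZMod (2^(n+3))) : ((pi8 n) z).val = z.val % 8 := by
  haveI : NeZero (2^(n+3)) := ⟨by positivity⟩
  simp only [pi8]
  rw [ZMod.castHom_apply, ← ZMod.natCast_val, ZMod.val_natCast]

lemma pi8_parity (n : ℕ) (z : ZMod (2^(n+3))) : ((pi8 n) z).val % 2 = z.val % 2 := by
  rw [pi8_val, Nat.mod_mod_of_dvd _ (by norm_num)]

lemma card_pi8_fiber (n : ℕ) (w : ZMod 8) :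
    (univ.filter fun z : ZMod (2^(n+3)) => (pi8 n) z = w).card = 2^n := by
  haveI : NeZero (2^(n+3)) := ⟨by positivity⟩
  have h1 : (univ.filter fun z : ZMod (2^(n+3)) => (pi8 n) z = w)
      = univ.filter fun z : ZMod (2^(n+3)) => z.val % 8 = w.val := by
    apply filter_congr
    intro z _
    constructor
    · intro h; rw [← pi8_val, h]
    · intro h
      apply ZMod.val_injective
      rw [pi8_val, h]
  rw [h1, transfer (2^(n+3)) (fun v => v % 8 = w.val)]
  rw [show (2:ℕ)^(n+3) = 8 * 2^n from by ring]
  exact rc 8 (2^n) w.val (ZMod.val_lt w)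

lemma card_odd (n : ℕ) :
    (univ.filter fun z : ZMod (2^(n+3)) => z.val % 2 = 1).card = 2^(n+2) := by
  haveI : NeZero (2^(n+3)) := ⟨by positivity⟩
  rw [transfer (2^(n+3)) (fun v => v % 2 = 1)]
  rw [show (2:ℕ)^(n+3) = 2 * 2^(n+2) from by ring]
  exact rc 2 (2^(n+2)) 1 (by norm_num)

lemma odd_sq_pi8 (n : ℕ) (z : ZMod (2^(n+3))) (hz : z.val % 2 = 1) :
    (pi8 n) (z^2) = 1 := by
  have h1 : ((pi8 n) z).val % 2 = 1 := by rw [pi8_parity]; exact hz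
  rw [map_pow]
  revert h1
  generalize (pi8 n) z = w
  revert w
  decide

-- L1'
lemma odd_sqrt_count (n : ℕ) (t : ZMod (2^(n+3))) :
    (univ.filter fun z : ZMod (2^(n+3)) => z.val % 2 = 1 ∧ z^2 = t).card
      = if (pi8 n) t = 1 then 4 else 0 := by
  haveI : NeZero (2^(n+3)) := ⟨by positivity⟩
  by_cases ht : (pi8 n) t = 1
  · rw [if_pos ht]
    -- counting argument: image of odds under squaring is exactly {π8 = 1}
    set odds := (univ.filter fun z : ZMod (2^(n+3)) => z.val % 2 = 1) with hodds
    set I := odds.image (fun z => z^2) with hI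
    have hfib : ∀ u ∈ I, (odds.filter (fun z => z^2 = u)).card = 4 := by
      intro u hu
      rw [hI, mem_image] at hu
      obtain ⟨x₀, hx₀, rfl⟩ := hu
      rw [hodds, mem_filter] at hx₀
      rw [hodds, filter_filter]
      exact roots_card n x₀ hx₀.2
    have hcard : odds.card = 4 * I.card := by
      rw [card_eq_sum_card_image (fun z => z^2) odds, ← hI]
      rw [sum_congr rfl hfib, sum_const, smul_eq_mul, mul_comm]
    have hIcard : I.card = 2^n := by
      have h1 : odds.card = 2^(n+2) := card_odd n
      have : (4 : ℕ) * I.card = 4 * 2^n := by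
        rw [← hcard, h1]; ring
      omega
    have hsub : I ⊆ univ.filter (fun u : ZMod (2^(n+3)) => (pi8 n) u = 1) := by
      intro u hu
      rw [hI, mem_image] at hu
      obtain ⟨x₀, hx₀, rfl⟩ := hu
      rw [hodds, mem_filter] at hx₀
      exact mem_filter.2 ⟨mem_univ _, odd_sq_pi8 n x₀ hx₀.2⟩
    have hJcard : (univ.filter (fun u : ZMod (2^(n+3)) => (pi8 n) u = 1)).card = 2^n :=
      card_pi8_fiber n 1
    have hIJ : I = univ.filter (fun u : ZMod (2^(n+3)) => (pi8 n) u = 1) :=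
      eq_of_subset_of_card_le hsub (by rw [hJcard, hIcard])
    have htI : t ∈ I := by
      rw [hIJ]
      exact mem_filter.2 ⟨mem_univ _, ht⟩
    have := hfib t htI
    rw [hodds, filter_filter] at this
    exact this
  · rw [if_neg ht]
    rw [card_eq_zero]
    rw [filter_eq_empty_iff]
    rintro z - ⟨hz1, rfl⟩
    exact ht (odd_sq_pi8 n z hz1)

lemma sum_ite_card {α : Type*} (s : Finset α) (c : α → Prop) [DecidablePred c] (m : ℕ) :
    (∑ a ∈ s, if c a then m else 0) = m * (s.filter c).card := by
  rw [← sum_filter, sum_const, smul_eq_mul, mul_comm]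

lemma card_pi8_pred (n : ℕ) (Q : ZMod 8 → Prop) [DecidablePred Q] :
    (univ.filter fun z : ZMod (2^(n+3)) => Q ((pi8 n) z)).card
      = 2^n * (univ.filter Q).card := by
  rw [card_eq_sum_card_fiberwise (f := pi8 n) (t := univ) (fun x _ => mem_univ _)]
  have h : ∀ w : ZMod 8,
      ((univ.filter fun z : ZMod (2^(n+3)) => Q ((pi8 n) z)).filter
        (fun z => (pi8 n) z = w)).card = if Q w then 2^n else 0 := by
    intro w
    rw [filter_filter]
    by_cases hw : Q w
    · rw [if_pos hw]
      have e : (univ.filter fun z : ZMod (2^(n+3)) => Q ((pi8 n) z) ∧ (pi8 n) z = w)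
          = univ.filter fun z => (pi8 n) z = w := by
        ext z
        simp only [mem_filter, mem_univ, true_and]
        constructor
        · rintro ⟨-, h2⟩; exact h2
        · intro h2; exact ⟨by rw [h2]; exact hw, h2⟩
      rw [e, card_pi8_fiber]
    · rw [if_neg hw, card_eq_zero, filter_eq_empty_iff]
      rintro z - ⟨hq, hw'⟩
      exact hw (hw' ▸ hq)
  rw [sum_congr rfl (fun w _ => h w), sum_ite_card]

lemma cardA (n : ℕ) (k : ZMod (2^(n+3))) :
    2^(n+3) ∣ (univ.filter fun p : ZMod (2^(n+3)) × ZMod (2^(n+3)) =>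
      (p.1^2 + p.2^2 = k) ∧ p.1.val % 2 = 1).card := by
  rw [card_filter, Fintype.sum_prod_type_right]
  have inner : ∀ y : ZMod (2^(n+3)),
      (∑ x : ZMod (2^(n+3)), if ((x^2 + y^2 = k) ∧ x.val % 2 = 1) then 1 else 0)
        = if ((pi8 n) y)^2 = (pi8 n) k - 1 then 4 else 0 := by
    intro y
    rw [← card_filter]
    have e : (univ.filter fun x : ZMod (2^(n+3)) => (x^2 + y^2 = k) ∧ x.val % 2 = 1)
        = univ.filter fun x => x.val % 2 = 1 ∧ x^2 = k - y^2 := by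
      ext x
      simp only [mem_filter, mem_univ, true_and]
      constructor
      · rintro ⟨h1, h2⟩; exact ⟨h2, by rw [← h1]; ring⟩
      · rintro ⟨h1, h2⟩; exact ⟨by rw [h2]; ring, h1⟩
    rw [e, odd_sqrt_count]
    congr 1
    simp only [eq_iff_iff]
    rw [map_sub, map_pow]
    constructor
    · intro h; linear_combination -h
    · intro h; linear_combination -h
  rw [sum_congr rfl (fun y _ => inner y), sum_ite_card]
  rw [card_pi8_pred n (fun w => w^2 = (pi8 n) k - 1)]
  obtain ⟨u, hu⟩ : 2 ∣ (univ.filter fun w : ZMod 8 => w^2 = (pi8 n) k - 1).card := by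
    have : ∀ c : ZMod 8, 2 ∣ (univ.filter fun w : ZMod 8 => w^2 = c).card := by decide
    exact this _
  rw [hu]
  exact ⟨u, by ring⟩

lemma cardB1 (n : ℕ) (k : ZMod (2^(n+3))) :
    2^(n+3) ∣ (univ.filter fun p : ZMod (2^(n+3)) × ZMod (2^(n+3)) =>
      ((p.1^2 + p.2^2 = k) ∧ ¬(p.1.val % 2 = 1)) ∧ p.2.val % 2 = 1).card := by
  rw [card_filter, Fintype.sum_prod_type]
  have inner : ∀ x : ZMod (2^(n+3)),
      (∑ y : ZMod (2^(n+3)), if (((x^2 + y^2 = k) ∧ ¬(x.val % 2 = 1)) ∧ y.val % 2 = 1) then 1 else 0)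
        = if (((pi8 n) x).val % 2 = 0 ∧ ((pi8 n) x)^2 = (pi8 n) k - 1) then 4 else 0 := by
    intro x
    by_cases hx : x.val % 2 = 1
    · rw [if_neg (by rw [pi8_parity]; omega)]
      rw [sum_eq_zero]
      intro y _
      rw [if_neg (by tauto)]
    · have hparity : ((pi8 n) x).val % 2 = 0 := by rw [pi8_parity]; omega
      rw [← card_filter]
      have e : (univ.filter fun y : ZMod (2^(n+3)) =>
            ((x^2 + y^2 = k) ∧ ¬(x.val % 2 = 1)) ∧ y.val % 2 = 1)
          = univ.filter fun y => y.val % 2 = 1 ∧ y^2 = k - x^2 := by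
        ext y
        simp only [mem_filter, mem_univ, true_and]
        constructor
        · rintro ⟨⟨h1, -⟩, h2⟩; exact ⟨h2, by rw [← h1]; ring⟩
        · rintro ⟨h1, h2⟩; exact ⟨⟨by rw [h2]; ring, hx⟩, h1⟩
      rw [e, odd_sqrt_count]
      congr 1
      simp only [eq_iff_iff]
      rw [map_sub, map_pow]
      constructor
      · intro h; exact ⟨hparity, by linear_combination -h⟩
      · rintro ⟨-, h⟩; linear_combination -h
  rw [sum_congr rfl (fun x _ => inner x), sum_ite_card]
  rw [card_pi8_pred n (fun w => w.val % 2 = 0 ∧ w^2 = (pi8 n) k - 1)]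
  obtain ⟨u, hu⟩ : 2 ∣ (univ.filter fun w : ZMod 8 =>
      w.val % 2 = 0 ∧ w^2 = (pi8 n) k - 1).card := by
    have : ∀ c : ZMod 8, 2 ∣ (univ.filter fun w : ZMod 8 =>
        w.val % 2 = 0 ∧ w^2 = c).card := by decide
    exact this _
  rw [hu]
  exact ⟨u, by ring⟩


lemma sq_add_half (n : ℕ) (s : ZMod (2^(n+3))) :
    (s + ((2^(n+2) : ℕ) : ZMod (2^(n+3))))^2 = s^2 := by
  set H : ZMod (2^(n+3)) := ((2^(n+2) : ℕ) : ZMod (2^(n+3))) with hH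
  have h2H : H + H = 0 := by
    rw [hH, ← Nat.cast_add]
    have e : (2:ℕ)^(n+2) + 2^(n+2) = 2^(n+3) := by ring
    rw [e, ZMod.natCast_self]
  have hH2 : H * H = 0 := by
    rw [hH, ← Nat.cast_mul]
    have e : (2:ℕ)^(n+2) * 2^(n+2) = 2^(n+3) * 2^(n+1) := by ring
    rw [e, Nat.cast_mul, ZMod.natCast_self, zero_mul]
  have e : (s + H)^2 = s^2 + (H + H) * s + H * H := by ring
  rw [e, h2H, hH2, zero_mul, add_zero, add_zero]

lemma cardB2 (n : ℕ) (k : ZMod (2^(n+3)))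
    (IH : 2^(n+1) ∣ (univ.filter fun q : ZMod (2^(n+1)) × ZMod (2^(n+1)) =>
       q.1^2 + q.2^2 = ((k.val/4 : ℕ) : ZMod (2^(n+1)))).card) :
    2^(n+3) ∣ (univ.filter fun p : ZMod (2^(n+3)) × ZMod (2^(n+3)) =>
      ((p.1^2 + p.2^2 = k) ∧ ¬(p.1.val % 2 = 1)) ∧ ¬(p.2.val % 2 = 1)).card := by
  haveI : NeZero (2^(n+3)) := ⟨by positivity⟩
  haveI : NeZero (2^(n+1)) := ⟨by positivity⟩
  have hp1 : (2:ℕ)^(n+3) = 4 * 2^(n+1) := by ring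
  have hp2 : (2:ℕ)^(n+2) = 2 * 2^(n+1) := by ring
  have hp3 : 0 < (2:ℕ)^(n+1) := by positivity
  have hself : ∀ z : ZMod (2^(n+3)), ((z.val : ℕ) : ZMod (2^(n+3))) = z := by
    intro z; rw [ZMod.natCast_val, ZMod.cast_id]
  have hself' : ∀ z : ZMod (2^(n+1)), ((z.val : ℕ) : ZMod (2^(n+1))) = z := by
    intro z; rw [ZMod.natCast_val, ZMod.cast_id]
  -- value of k for an even-even solution
  have hkval : ∀ x y : ZMod (2^(n+3)), x^2 + y^2 = k → ¬(x.val % 2 = 1) → ¬(y.val % 2 = 1) →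
      k.val = 4 * (((x.val/2)^2 + (y.val/2)^2) % 2^(n+1)) := by
    intro x y heq hx hy
    have hk : k = ((x.val^2 + y.val^2 : ℕ) : ZMod (2^(n+3))) := by
      rw [← heq]; push_cast; rw [hself, hself]
    have hval : k.val = (x.val^2 + y.val^2) % 2^(n+3) := by
      rw [hk, ZMod.val_natCast]
    obtain ⟨u, hu⟩ : ∃ u, x.val = 2*u := ⟨x.val/2, by omega⟩
    obtain ⟨v, hv⟩ : ∃ v, y.val = 2*v := ⟨y.val/2, by omega⟩
    have he : x.val^2 + y.val^2 = 4*(u^2+v^2) := by rw [hu, hv]; ring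
    have h2 : k.val = 4*(u^2+v^2) % 2^(n+3) := by rw [hval, he]
    have h3 : 4*(u^2+v^2) % 2^(n+3) = 4*((u^2+v^2) % 2^(n+1)) := by
      rw [hp1, Nat.mul_mod_mul_left]
    rw [show x.val/2 = u from by omega, show y.val/2 = v from by omega]
    omega
  by_cases h4 : 4 ∣ k.val
  · -- main case: 4-to-1 map onto solutions mod 2^(n+1)
    have hmaps : ∀ p ∈ (univ.filter fun p : ZMod (2^(n+3)) × ZMod (2^(n+3)) =>
        ((p.1^2 + p.2^2 = k) ∧ ¬(p.1.val % 2 = 1)) ∧ ¬(p.2.val % 2 = 1)),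
        ((((p.1.val/2 : ℕ) : ZMod (2^(n+1))), ((p.2.val/2 : ℕ) : ZMod (2^(n+1)))) :
          ZMod (2^(n+1)) × ZMod (2^(n+1))) ∈
        (univ.filter fun q : ZMod (2^(n+1)) × ZMod (2^(n+1)) =>
          q.1^2 + q.2^2 = ((k.val/4 : ℕ) : ZMod (2^(n+1)))) := by
      rintro ⟨x, y⟩ hp
      rw [mem_filter] at hp
      obtain ⟨-, ⟨heq, hx⟩, hy⟩ := hp
      have hkv := hkval x y heq hx hy
      refine mem_filter.2 ⟨mem_univ _, ?_⟩
      show ((x.val/2 : ℕ) : ZMod (2^(n+1)))^2 + ((y.val/2 : ℕ) : ZMod (2^(n+1)))^2 = _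
      have h1 : k.val / 4 = ((x.val/2)^2 + (y.val/2)^2) % 2^(n+1) := by omega
      rw [h1]
      have h2 : ((((x.val/2)^2 + (y.val/2)^2 : ℕ)) : ZMod (2^(n+1)))
          = ((((x.val/2)^2 + (y.val/2)^2) % 2^(n+1) : ℕ) : ZMod (2^(n+1))) :=
        (ZMod.natCast_eq_natCast_iff _ _ _).2 (Nat.mod_modEq _ _).symm
      rw [← h2]
      push_cast
      ring
    rw [card_eq_sum_card_fiberwise hmaps]
    have hfib4 : ∀ q ∈ (univ.filter fun q : ZMod (2^(n+1)) × ZMod (2^(n+1)) =>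
          q.1^2 + q.2^2 = ((k.val/4 : ℕ) : ZMod (2^(n+1)))),
        (((univ.filter fun p : ZMod (2^(n+3)) × ZMod (2^(n+3)) =>
          ((p.1^2 + p.2^2 = k) ∧ ¬(p.1.val % 2 = 1)) ∧ ¬(p.2.val % 2 = 1))).filter
          (fun p => ((((p.1.val/2 : ℕ) : ZMod (2^(n+1))), ((p.2.val/2 : ℕ) : ZMod (2^(n+1)))) :
            ZMod (2^(n+1)) × ZMod (2^(n+1))) = q)).card = 4 := by
      intro q hq
      rw [mem_filter] at hq
      obtain ⟨-, hq⟩ := hq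
      set a := q.1.val with haq
      set b := q.2.val with hbq
      have ha : a < 2^(n+1) := ZMod.val_lt q.1
      have hb : b < 2^(n+1) := ZMod.val_lt q.2
      set X₁ : ZMod (2^(n+3)) := ((2*a : ℕ) : ZMod (2^(n+3))) with hX1
      set X₂ : ZMod (2^(n+3)) := ((2*a + 2^(n+2) : ℕ) : ZMod (2^(n+3))) with hX2
      set Y₁ : ZMod (2^(n+3)) := ((2*b : ℕ) : ZMod (2^(n+3))) with hY1
      set Y₂ : ZMod (2^(n+3)) := ((2*b + 2^(n+2) : ℕ) : ZMod (2^(n+3))) with hY2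
      have hX1v : X₁.val = 2*a := ZMod.val_cast_of_lt (by omega)
      have hX2v : X₂.val = 2*a + 2^(n+2) := ZMod.val_cast_of_lt (by omega)
      have hY1v : Y₁.val = 2*b := ZMod.val_cast_of_lt (by omega)
      have hY2v : Y₂.val = 2*b + 2^(n+2) := ZMod.val_cast_of_lt (by omega)
      -- the equation mod 2^(n+3)
      have hqa : ((a : ℕ) : ZMod (2^(n+1))) = q.1 := by rw [haq]; exact hself' q.1
      have hqb : ((b : ℕ) : ZMod (2^(n+1))) = q.2 := by rw [hbq]; exact hself' q.2
      have hmodeq : (a^2 + b^2 : ℕ) ≡ k.val/4 [MOD 2^(n+1)] := by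
        apply (ZMod.natCast_eq_natCast_iff _ _ _).1
        push_cast
        rw [hqa, hqb]
        exact hq
      have hmod : (4*(a^2+b^2) : ℕ) ≡ k.val [MOD 2^(n+3)] := by
        have h5 := Nat.ModEq.mul_left' (c := 4) hmodeq
        rw [Nat.mul_div_cancel' h4] at h5
        rw [← hp1] at h5
        exact h5
      have hkey : X₁^2 + Y₁^2 = k := by
        have : X₁^2 + Y₁^2 = ((4*(a^2+b^2) : ℕ) : ZMod (2^(n+3))) := by
          rw [hX1, hY1]; push_cast; ring
        rw [this, (ZMod.natCast_eq_natCast_iff _ _ _).2 hmod, hself]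
      have hX21 : X₂ = X₁ + ((2^(n+2) : ℕ) : ZMod (2^(n+3))) := by
        rw [hX1, hX2]; push_cast; ring
      have hY21 : Y₂ = Y₁ + ((2^(n+2) : ℕ) : ZMod (2^(n+3))) := by
        rw [hY1, hY2]; push_cast; ring
      have hX2sq : X₂^2 = X₁^2 := by rw [hX21]; exact sq_add_half n X₁
      have hY2sq : Y₂^2 = Y₁^2 := by rw [hY21]; exact sq_add_half n Y₁
      -- Φ components
      have hΦX1 : ((X₁.val/2 : ℕ) : ZMod (2^(n+1))) = q.1 := by
        rw [hX1v, Nat.mul_div_cancel_left a (by norm_num : 0 < 2)]; exact hqa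
      have hΦX2 : ((X₂.val/2 : ℕ) : ZMod (2^(n+1))) = q.1 := by
        have : X₂.val/2 = a + 2^(n+1) := by omega
        rw [this, Nat.cast_add, ZMod.natCast_self, add_zero]
        exact hqa
      have hΦY1 : ((Y₁.val/2 : ℕ) : ZMod (2^(n+1))) = q.2 := by
        rw [hY1v, Nat.mul_div_cancel_left b (by norm_num : 0 < 2)]; exact hqb
      have hΦY2 : ((Y₂.val/2 : ℕ) : ZMod (2^(n+1))) = q.2 := by
        have : Y₂.val/2 = b + 2^(n+1) := by omega
        rw [this, Nat.cast_add, ZMod.natCast_self, add_zero]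
        exact hqb
      -- parity
      have hX1e : ¬(X₁.val % 2 = 1) := by omega
      have hX2e : ¬(X₂.val % 2 = 1) := by omega
      have hY1e : ¬(Y₁.val % 2 = 1) := by omega
      have hY2e : ¬(Y₂.val % 2 = 1) := by omega
      -- the fiber is the explicit four-element set
      have hset : (((univ.filter fun p : ZMod (2^(n+3)) × ZMod (2^(n+3)) =>
          ((p.1^2 + p.2^2 = k) ∧ ¬(p.1.val % 2 = 1)) ∧ ¬(p.2.val % 2 = 1))).filter
          (fun p => ((((p.1.val/2 : ℕ) : ZMod (2^(n+1))), ((p.2.val/2 : ℕ) : ZMod (2^(n+1)))) :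
            ZMod (2^(n+1)) × ZMod (2^(n+1))) = q))
          = {(X₁,Y₁),(X₁,Y₂),(X₂,Y₁),(X₂,Y₂)} := by
        ext p
        rw [filter_filter, mem_filter]
        simp only [mem_univ, true_and, mem_insert, mem_singleton, Prod.mk.injEq, Prod.ext_iff]
        constructor
        · rintro ⟨⟨⟨heq, hxe⟩, hye⟩, hΦ1, hΦ2⟩
          have hxx : p.1 = X₁ ∨ p.1 = X₂ := by
            obtain ⟨u, hu⟩ : ∃ u, p.1.val = 2*u := ⟨p.1.val/2, by omega⟩
            have hval1 : ((u : ℕ) : ZMod (2^(n+1))).val = u % 2^(n+1) := ZMod.val_natCast (2^(n+1)) u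
            have hcast : ((u : ℕ) : ZMod (2^(n+1))) = q.1 := by
              rw [show u = p.1.val/2 by omega]; exact hΦ1
            have hum : u % 2^(n+1) = a := by rw [← hval1, hcast, ← haq]
            have hub : u < 2^(n+2) := by
              have := ZMod.val_lt p.1; omega
            have h01 : u = a ∨ u = a + 2^(n+1) := by
              rcases Nat.lt_or_ge u (2^(n+1)) with h | h
              · left; rw [← hum, Nat.mod_eq_of_lt h]
              · right
                have h9 : u % 2^(n+1) = u - 2^(n+1) := by
                  rw [Nat.mod_eq_sub_mod h, Nat.mod_eq_of_lt (by omega)]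
                omega
            rcases h01 with h0 | h0
            · left
              have : p.1.val = 2*a := by omega
              rw [← hself p.1, this, ← hX1]
            · right
              have : p.1.val = 2*a + 2^(n+2) := by omega
              rw [← hself p.1, this, ← hX2]
          have hyy : p.2 = Y₁ ∨ p.2 = Y₂ := by
            obtain ⟨u, hu⟩ : ∃ u, p.2.val = 2*u := ⟨p.2.val/2, by omega⟩
            have hval1 : ((u : ℕ) : ZMod (2^(n+1))).val = u % 2^(n+1) := ZMod.val_natCast (2^(n+1)) u
            have hcast : ((u : ℕ) : ZMod (2^(n+1))) = q.2 := by
              rw [show u = p.2.val/2 by omega]; exact hΦ2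
            have hum : u % 2^(n+1) = b := by rw [← hval1, hcast, ← hbq]
            have hub : u < 2^(n+2) := by
              have := ZMod.val_lt p.2; omega
            have h01 : u = b ∨ u = b + 2^(n+1) := by
              rcases Nat.lt_or_ge u (2^(n+1)) with h | h
              · left; rw [← hum, Nat.mod_eq_of_lt h]
              · right
                have h9 : u % 2^(n+1) = u - 2^(n+1) := by
                  rw [Nat.mod_eq_sub_mod h, Nat.mod_eq_of_lt (by omega)]
                omega
            rcases h01 with h0 | h0
            · left
              have : p.2.val = 2*b := by omega
              rw [← hself p.2, this, ← hY1]
            · right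
              have : p.2.val = 2*b + 2^(n+2) := by omega
              rw [← hself p.2, this, ← hY2]
          tauto
        · rintro (⟨h1, h2⟩ | ⟨h1, h2⟩ | ⟨h1, h2⟩ | ⟨h1, h2⟩) <;> rw [h1, h2] <;>
            refine ⟨⟨⟨?_, ?_⟩, ?_⟩, ?_, ?_⟩
          · exact hkey
          · exact hX1e
          · exact hY1e
          · exact hΦX1
          · exact hΦY1
          · rw [hY2sq]; exact hkey
          · exact hX1e
          · exact hY2e
          · exact hΦX1
          · exact hΦY2
          · rw [hX2sq]; exact hkey
          · exact hX2e
          · exact hY1e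
          · exact hΦX2
          · exact hΦY1
          · rw [hX2sq, hY2sq]; exact hkey
          · exact hX2e
          · exact hY2e
          · exact hΦX2
          · exact hΦY2
      rw [hset]
      -- distinctness
      have hXne : X₁ ≠ X₂ := by
        intro h0
        have := hX1v
        rw [h0, hX2v] at this
        omega
      have hYne : Y₁ ≠ Y₂ := by
        intro h0
        have := hY1v
        rw [h0, hY2v] at this
        omega
      rw [card_insert_of_notMem (by
            simp only [mem_insert, mem_singleton, Prod.mk.injEq, not_or]
            exact ⟨fun h => hYne h.2, fun h => hXne h.1, fun h => hXne h.1⟩),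
          card_insert_of_notMem (by
            simp only [mem_insert, mem_singleton, Prod.mk.injEq, not_or]
            exact ⟨fun h => hXne h.1, fun h => hXne h.1⟩),
          card_insert_of_notMem (by
            simp only [mem_singleton, Prod.mk.injEq, not_and]
            exact fun _ => hYne),
          card_singleton]
    rw [sum_congr rfl hfib4, sum_const, smul_eq_mul]
    obtain ⟨w, hw⟩ := IH
    rw [hw]
    exact ⟨w, by ring⟩
  · -- empty case
    have : (univ.filter fun p : ZMod (2^(n+3)) × ZMod (2^(n+3)) =>
        ((p.1^2 + p.2^2 = k) ∧ ¬(p.1.val % 2 = 1)) ∧ ¬(p.2.val % 2 = 1)) = ∅ := by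
      rw [filter_eq_empty_iff]
      rintro ⟨x, y⟩ -
      rintro ⟨⟨heq, hx⟩, hy⟩
      exact h4 ⟨_, hkval x y heq hx hy⟩
    rw [this, card_empty]
    exact dvd_zero _

lemma helper (m : ℕ) : ∀ k : ZMod (2^(m+1)),
    2^(m+1) ∣ (univ.filter fun xy : ZMod (2^(m+1)) × ZMod (2^(m+1)) =>
      xy.1^2 + xy.2^2 = k).card := by
  induction m using Nat.strong_induction_on with
  | _ m IH =>
    rcases m with _ | _ | j
    · decide
    · decide
    · intro k
      have IH' := IH j (by omega)
      show 2^(j+3) ∣ (univ.filter fun xy : ZMod (2^(j+3)) × ZMod (2^(j+3)) =>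
        xy.1^2 + xy.2^2 = k).card
      rw [← card_filter_add_card_filter_not
        (s := univ.filter (fun p : ZMod (2^(j+3)) × ZMod (2^(j+3)) => p.1^2 + p.2^2 = k))
        (p := fun p => p.1.val % 2 = 1), filter_filter, filter_filter]
      have e2 : (univ.filter (fun p : ZMod (2^(j+3)) × ZMod (2^(j+3)) =>
            (p.1^2 + p.2^2 = k) ∧ ¬(p.1.val % 2 = 1))).card
          = (univ.filter (fun p : ZMod (2^(j+3)) × ZMod (2^(j+3)) =>
              ((p.1^2 + p.2^2 = k) ∧ ¬(p.1.val % 2 = 1)) ∧ p.2.val % 2 = 1)).card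
            + (univ.filter (fun p : ZMod (2^(j+3)) × ZMod (2^(j+3)) =>
              ((p.1^2 + p.2^2 = k) ∧ ¬(p.1.val % 2 = 1)) ∧ ¬(p.2.val % 2 = 1))).card := by
        rw [← card_filter_add_card_filter_not
          (s := univ.filter (fun p : ZMod (2^(j+3)) × ZMod (2^(j+3)) =>
            (p.1^2 + p.2^2 = k) ∧ ¬(p.1.val % 2 = 1)))
          (p := fun p => p.2.val % 2 = 1), filter_filter, filter_filter]
      rw [e2]
      exact dvd_add (cardA j k) (dvd_add (cardB1 j k) (cardB2 j k (IH' _)))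

theorem stmt_12 (m : ℕ) (hm : 1 ≤ m) (k : ZMod (2 ^ m)) :
    2 ^ m ∣ (Finset.univ.filter fun xy : ZMod (2 ^ m) × ZMod (2 ^ m) =>
      xy.1 ^ 2 + xy.2 ^ 2 = k).card := by
  obtain ⟨j, rfl⟩ : ∃ j, m = j + 1 := ⟨m - 1, by omega⟩
  exact helper j k
end

section
/- For every m ≥ 1 and every k in Z/2^m Z, the number of triples (x,y,z) in (Z/2^m Z)^3 with x^2 + y^2 + z^2 ≡ k (mod 2^m) is divisible by 2^m. -/
set_option maxRecDepth 10000

/-- Count of solutions of `x²+y²+z² ≡ k (mod 2^M)` with `x,y,z < 2^M`. -/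
def C (M k : ℕ) : ℕ :=
  ((Finset.range (2^M) ×ˢ Finset.range (2^M) ×ˢ Finset.range (2^M)).filter
    (fun v => (v.1^2 + v.2.1^2 + v.2.2^2) % 2^M = k % 2^M)).card

lemma C_mod (M k : ℕ) : C M k = C M (k % 2^M) := by
  unfold C
  congr 1
  simp [Nat.mod_mod_of_dvd]

lemma base (M k : ℕ) (h1 : 1 ≤ M) (h3 : M ≤ 3) : 2^M ∣ C M k := by
  rw [C_mod]
  have hk : k % 2^M < 8 := lt_of_lt_of_le (Nat.mod_lt _ (by positivity)) (by
    calc 2^M ≤ 2^3 := Nat.pow_le_pow_right (by norm_num) h3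
    _ = 8 := by norm_num)
  interval_cases M <;> interval_cases h : (k % 2^_) <;> decide

lemma cong_add (n A A' B : ℕ) (h : A % n = A' % n) : (A + B) % n = (A' + B) % n := by
  rw [Nat.add_mod, h, ← Nat.add_mod]

lemma shift_mod (n s k t : ℕ) (h : s % n = k % n) : (s + t) % n = (k + t) % n :=
  cong_add n s k t h

lemma cong_add3 (n a a' b b' c c' : ℕ) (ha : a % n = a' % n) (hb : b % n = b' % n)
    (hc : c % n = c' % n) : (a+b+c) % n = (a'+b'+c') % n := by
  conv_lhs => rw [Nat.add_mod, Nat.add_mod a b, ha, hb, hc]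
  conv_rhs => rw [Nat.add_mod, Nat.add_mod a' b']

lemma sq_mod_four (x : ℕ) : x^2 % 4 = x % 2 := by
  rcases Nat.even_or_odd x with ⟨c, hc⟩ | ⟨c, hc⟩ <;> subst hc <;> ring_nf <;> omega

lemma sq_lift (T n : ℕ) : (n % (2*T))^2 % (4*T) = n^2 % (4*T) := by
  conv_rhs => rw [← Nat.mod_add_div n (2*T)]
  rw [show (n % (2*T) + 2*T*(n/(2*T)))^2
      = (n % (2*T))^2 + 4*T*((n % (2*T))*(n/(2*T)) + T*(n/(2*T))^2) by ring,
    Nat.add_mul_mod_self_left]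

lemma sum_sq_mod (T x y z : ℕ) :
    ((x % (2*T))^2 + (y % (2*T))^2 + (z % (2*T))^2) % (4*T) = (x^2+y^2+z^2) % (4*T) :=
  cong_add3 _ _ _ _ _ _ _ (sq_lift T x) (sq_lift T y) (sq_lift T z)

/-! ### The recursion for `4 ∣ k` -/

lemma rec4_key (P u v w a b c : ℕ) :
    ((2*u+2*P*a)^2 + (2*v+2*P*b)^2 + (2*w+2*P*c)^2) % (4*P)
      = (4*(u^2+v^2+w^2)) % (4*P) := by
  rw [show (2*u+2*P*a)^2 + (2*v+2*P*b)^2 + (2*w+2*P*c)^2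
      = 4*(u^2+v^2+w^2) + (4*P)*(2*a*u+P*a^2+2*b*v+P*b^2+2*c*w+P*c^2) by ring]
  exact Nat.add_mul_mod_self_left _ _ _

lemma all_even (x y z : ℕ) (h : (x^2+y^2+z^2) % 4 = 0) :
    x % 2 = 0 ∧ y % 2 = 0 ∧ z % 2 = 0 := by
  have hx := sq_mod_four x
  have hy := sq_mod_four y
  have hz := sq_mod_four z
  omega

lemma mem_even (P k x y z : ℕ) (hk : k % 4 = 0)
    (hs : (x^2+y^2+z^2) % (4*P) = k % (4*P)) : x % 2 = 0 ∧ y % 2 = 0 ∧ z % 2 = 0 := by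
  apply all_even
  have d4 : (4:ℕ) ∣ 4*P := ⟨P, rfl⟩
  calc (x^2+y^2+z^2) % 4 = ((x^2+y^2+z^2) % (4*P)) % 4 := (Nat.mod_mod_of_dvd _ d4).symm
    _ = (k % (4*P)) % 4 := by rw [hs]
    _ = k % 4 := Nat.mod_mod_of_dvd _ d4
    _ = 0 := hk

lemma coord (P x : ℕ) (hP : 0 < P) (hx : x < 4*P) (he : x % 2 = 0) :
    x/(2*P) < 2 ∧ (x/2) % P < P ∧ 2*((x/2) % P) + 2*P*(x/(2*P)) = x := by
  refine ⟨?_, Nat.mod_lt _ hP, ?_⟩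
  · rw [Nat.div_lt_iff_lt_mul (by positivity)]; omega
  · have e1 : 2*(x/2) = x := by omega
    have e2 : x/(2*P) = (x/2)/P := by
      conv_lhs => rw [← e1]
      exact Nat.mul_div_mul_left _ _ (by norm_num)
    rw [e2]
    have h3 : 2*P*((x/2)/P) = 2*(P*((x/2)/P)) := by ring
    have := Nat.mod_add_div (x/2) P
    omega

lemma coord_inv (P u a : ℕ) (hP : 0 < P) (hu : u < P) (ha : a < 2) :
    (2*u + 2*P*a)/(2*P) = a ∧ ((2*u+2*P*a)/2) % P = u := by
  constructor
  · have e1 : 2*u + 2*P*a = 2*u + (2*P)*a := by ring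
    rw [e1, Nat.add_mul_div_left _ _ (by positivity)]
    have : (2*u)/(2*P) = u/P := Nat.mul_div_mul_left _ _ (by norm_num)
    rw [this, Nat.div_eq_of_lt hu]
    omega
  · have e1 : (2*u+2*P*a)/2 = u + P*a := by
      rw [show 2*u+2*P*a = 2*(u + P*a) by ring]
      omega
    rw [e1, Nat.add_mul_mod_self_left, Nat.mod_eq_of_lt hu]

lemma rec4 (M k : ℕ) (hM : 2 ≤ M) (hk : k % 4 = 0) : C M k = 8 * C (M-2) (k/4) := by
  unfold C
  have hP0 : 0 < 2^(M-2) := by positivity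
  set P := 2^(M-2) with hP
  have hMP : (2:ℕ)^M = 4*P := by
    rw [hP]
    conv_lhs => rw [show M = (M-2)+2 by omega]
    rw [pow_add]; ring
  have hk4 : 4 * (k/4) = k := Nat.mul_div_cancel' (Nat.dvd_of_mod_eq_zero hk)
  rw [hMP]
  rw [show (8:ℕ) = ((Finset.range 2 ×ˢ Finset.range 2 ×ˢ Finset.range 2)).card by decide,
    ← Finset.card_product]
  apply Finset.card_nbij'
    (i := fun v => ((v.1/(2*P), v.2.1/(2*P), v.2.2/(2*P)),
                    ((v.1/2) % P, (v.2.1/2) % P, (v.2.2/2) % P)))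
    (j := fun p => (2*p.2.1 + 2*P*p.1.1, 2*p.2.2.1 + 2*P*p.1.2.1, 2*p.2.2.2 + 2*P*p.1.2.2))
  · rintro ⟨x, y, z⟩ hv
    simp only [Finset.mem_coe, Finset.mem_filter, Finset.mem_product, Finset.mem_range] at hv
    obtain ⟨⟨hx, hy, hz⟩, hs⟩ := hv
    obtain ⟨ex, ey, ez⟩ := mem_even P k x y z hk hs
    obtain ⟨cx1, cx2, cx3⟩ := coord P x hP0 hx ex
    obtain ⟨cy1, cy2, cy3⟩ := coord P y hP0 hy ey
    obtain ⟨cz1, cz2, cz3⟩ := coord P z hP0 hz ez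
    simp only [Finset.mem_coe, Finset.mem_filter, Finset.mem_product, Finset.mem_range]
    refine ⟨⟨cx1, cy1, cz1⟩, ⟨cx2, cy2, cz2⟩, ?_⟩
    have hs' : ((2*((x/2)%P) + 2*P*(x/(2*P)))^2 + (2*((y/2)%P) + 2*P*(y/(2*P)))^2
        + (2*((z/2)%P) + 2*P*(z/(2*P)))^2) % (4*P) = k % (4*P) := by
      rw [cx3, cy3, cz3]; exact hs
    rw [rec4_key] at hs'
    rw [← hk4] at hs'
    rw [Nat.mul_mod_mul_left, Nat.mul_mod_mul_left] at hs'
    omega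
  · rintro ⟨⟨a, b, c⟩, ⟨u, v, w⟩⟩ hp
    simp only [Finset.mem_coe, Finset.mem_filter, Finset.mem_product, Finset.mem_range] at hp
    obtain ⟨⟨ha, hb, hc⟩, ⟨hu, hv, hw⟩, hs⟩ := hp
    simp only [Finset.mem_coe, Finset.mem_filter, Finset.mem_product, Finset.mem_range]
    have bx : 2*u + 2*P*a < 4*P := by
      have := Nat.mul_le_mul_left (2*P) (show a ≤ 1 by omega); omega
    have by' : 2*v + 2*P*b < 4*P := by
      have := Nat.mul_le_mul_left (2*P) (show b ≤ 1 by omega); omega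
    have bz : 2*w + 2*P*c < 4*P := by
      have := Nat.mul_le_mul_left (2*P) (show c ≤ 1 by omega); omega
    refine ⟨⟨bx, by', bz⟩, ?_⟩
    rw [rec4_key, ← hk4, Nat.mul_mod_mul_left, Nat.mul_mod_mul_left]
    omega
  · rintro ⟨x, y, z⟩ hv
    simp only [Finset.mem_coe, Finset.mem_filter, Finset.mem_product, Finset.mem_range] at hv
    obtain ⟨⟨hx, hy, hz⟩, hs⟩ := hv
    obtain ⟨ex, ey, ez⟩ := mem_even P k x y z hk hs
    simp only [Prod.mk.injEq]
    exact ⟨(coord P x hP0 hx ex).2.2, (coord P y hP0 hy ey).2.2, (coord P z hP0 hz ez).2.2⟩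
  · rintro ⟨⟨a, b, c⟩, ⟨u, v, w⟩⟩ hp
    simp only [Finset.mem_coe, Finset.mem_filter, Finset.mem_product, Finset.mem_range] at hp
    obtain ⟨⟨ha, hb, hc⟩, ⟨hu, hv, hw⟩, hs⟩ := hp
    simp only [Prod.mk.injEq]
    exact ⟨⟨(coord_inv P u a hP0 hu ha).1, (coord_inv P v b hP0 hv hb).1,
      (coord_inv P w c hP0 hw hc).1⟩,
      (coord_inv P u a hP0 hu ha).2, (coord_inv P v b hP0 hv hb).2,
      (coord_inv P w c hP0 hw hc).2⟩

/-! ### The recursion for `4 ∤ k` -/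

def sig (R x : ℕ) : ℕ := (x * (1 + 4*R)) % (8*R)

lemma sig_lt (R x : ℕ) (hR : 0 < R) : sig R x < 8*R := Nat.mod_lt _ (by positivity)

lemma sig_sig (R x : ℕ) (hx : x < 8*R) : sig R (sig R x) = x := by
  unfold sig
  rw [Nat.mod_mul_mod, show x*(1+4*R)*(1+4*R) = x + 8*R*(x + 2*R*x) by ring,
    Nat.add_mul_mod_self_left, Nat.mod_eq_of_lt hx]

lemma sig_parity (R x : ℕ) (hR : 0 < R) : sig R x % 2 = x % 2 := by
  unfold sig
  have h2 : (2:ℕ) ∣ 8*R := ⟨4*R, by ring⟩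
  rw [Nat.mod_mod_of_dvd _ h2]
  have h3 := Nat.mul_mod x (1+4*R) 2
  have h1 : (1+4*R) % 2 = 1 := by omega
  rw [h1, mul_one] at h3
  omega

lemma sig_sq (R x : ℕ) (hx : x % 2 = 1) :
    (sig R x)^2 % (16*R) = (x^2 + 8*R) % (16*R) := by
  unfold sig
  have h1 : ((x*(1+4*R)) % (8*R))^2 % (16*R) = (x*(1+4*R))^2 % (16*R) := by
    have := sq_lift (4*R) (x*(1+4*R))
    rw [show 2*(4*R) = 8*R by ring, show 4*(4*R) = 16*R by ring] at this
    exact this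
  rw [h1]
  obtain ⟨s, rfl⟩ : ∃ s, x = 2*s+1 := ⟨x/2, by omega⟩
  rw [show ((2*s+1)*(1+4*R))^2
      = ((2*s+1)^2 + 8*R) + 16*R*(2*s^2+2*s + R*(4*s^2+4*s+1)) by ring,
    Nat.add_mul_mod_self_left]

def TT (R : ℕ) (v : ℕ × ℕ × ℕ) : ℕ × ℕ × ℕ :=
  if v.1 % 2 = 1 then (sig R v.1, v.2.1, v.2.2)
  else if v.2.1 % 2 = 1 then (v.1, sig R v.2.1, v.2.2)
  else (v.1, v.2.1, sig R v.2.2)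

lemma not_all_even (R k x y z : ℕ) (hk4 : k % 4 ≠ 0)
    (hs : (x^2+y^2+z^2) % (16*R) = k % (16*R)) :
    ¬(x % 2 = 0 ∧ y % 2 = 0 ∧ z % 2 = 0) := by
  rintro ⟨h1, h2, h3⟩
  have d4 : (4:ℕ) ∣ 16*R := ⟨4*R, by ring⟩
  have e : (x^2+y^2+z^2) % 4 = k % 4 := by
    rw [← Nat.mod_mod_of_dvd _ d4, hs, Nat.mod_mod_of_dvd _ d4]
  have hx := sq_mod_four x
  have hy := sq_mod_four y
  have hz := sq_mod_four z
  omega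

lemma TT_sum (R x y z : ℕ) (hR : 0 < R) (hodd : ¬(x % 2 = 0 ∧ y % 2 = 0 ∧ z % 2 = 0)) :
    ((TT R (x,y,z)).1^2 + (TT R (x,y,z)).2.1^2 + (TT R (x,y,z)).2.2^2) % (16*R)
      = ((x^2+y^2+z^2) + 8*R) % (16*R) := by
  unfold TT
  by_cases h1 : x % 2 = 1
  · simp only [if_pos h1]
    rw [show (sig R x)^2 + y^2 + z^2 = (sig R x)^2 + (y^2 + z^2) by ring,
      cong_add _ _ _ _ (sig_sq R x h1),
      show (x^2 + 8*R) + (y^2 + z^2) = (x^2+y^2+z^2) + 8*R by ring]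
  · by_cases h2 : y % 2 = 1
    · simp only [if_neg h1, if_pos h2]
      rw [show x^2 + (sig R y)^2 + z^2 = (sig R y)^2 + (x^2 + z^2) by ring,
        cong_add _ _ _ _ (sig_sq R y h2),
        show (y^2 + 8*R) + (x^2 + z^2) = (x^2+y^2+z^2) + 8*R by ring]
    · have h3 : z % 2 = 1 := by
        rcases Nat.mod_two_eq_zero_or_one z with h | h
        · exact absurd ⟨by omega, by omega, h⟩ hodd
        · exact h
      simp only [if_neg h1, if_neg h2]
      rw [show x^2 + y^2 + (sig R z)^2 = (sig R z)^2 + (x^2 + y^2) by ring,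
        cong_add _ _ _ _ (sig_sq R z h3),
        show (z^2 + 8*R) + (x^2 + y^2) = (x^2+y^2+z^2) + 8*R by ring]

lemma TT_invol (R x y z : ℕ) (hR : 0 < R) (hx : x < 8*R) (hy : y < 8*R) (hz : z < 8*R) :
    TT R (TT R (x,y,z)) = (x,y,z) := by
  by_cases h1 : x % 2 = 1
  · have e1 : TT R (x,y,z) = (sig R x, y, z) := by unfold TT; simp only [if_pos h1]
    have hp : sig R x % 2 = 1 := by rw [sig_parity R x hR]; exact h1
    rw [e1]
    unfold TT
    simp only [if_pos hp]
    rw [sig_sig R x hx]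
  · by_cases h2 : y % 2 = 1
    · have e1 : TT R (x,y,z) = (x, sig R y, z) := by unfold TT; simp only [if_neg h1, if_pos h2]
      have hp : sig R y % 2 = 1 := by rw [sig_parity R y hR]; exact h2
      rw [e1]
      unfold TT
      simp only [if_neg h1, if_pos hp]
      rw [sig_sig R y hy]
    · have e1 : TT R (x,y,z) = (x, y, sig R z) := by unfold TT; simp only [if_neg h1, if_neg h2]
      rw [e1]
      unfold TT
      simp only [if_neg h1, if_neg h2]
      rw [sig_sig R z hz]

lemma TT_bounds (R x y z : ℕ) (hR : 0 < R) (hx : x < 8*R) (hy : y < 8*R) (hz : z < 8*R) :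
    (TT R (x,y,z)).1 < 8*R ∧ (TT R (x,y,z)).2.1 < 8*R ∧ (TT R (x,y,z)).2.2 < 8*R := by
  unfold TT
  split_ifs <;> exact ⟨by first | exact sig_lt R _ hR | assumption,
    by first | exact sig_lt R _ hR | assumption, by first | exact sig_lt R _ hR | assumption⟩

lemma mod_iff (R s k : ℕ) (hR : 0 < R) :
    (s % (16*R) = k % (16*R) ∨ s % (16*R) = (k + 8*R) % (16*R)) ↔ s % (8*R) = k % (8*R) := by
  have h8 : 0 < 8*R := by positivity
  have e1 : s % (16*R) = s % (8*R) + 8*R*(s/(8*R) % 2) := by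
    rw [show 16*R = 8*R*2 by ring]; exact Nat.mod_mul
  have e2 : k % (16*R) = k % (8*R) + 8*R*(k/(8*R) % 2) := by
    rw [show 16*R = 8*R*2 by ring]; exact Nat.mod_mul
  have e3 : (k + 8*R) % (16*R) = k % (8*R) + 8*R*((k/(8*R) + 1) % 2) := by
    rw [show 16*R = 8*R*2 by ring, Nat.mod_mul, Nat.add_mod_right, Nat.add_div_right _ h8]
  have ha : s % (8*R) < 8*R := Nat.mod_lt _ h8
  have hb : k % (8*R) < 8*R := Nat.mod_lt _ h8
  rw [e1, e2, e3]
  generalize hE : s/(8*R) % 2 = e at *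
  generalize hF : k/(8*R) % 2 = f at *
  have he : e ≤ 1 := by omega
  have hf : f ≤ 1 := by omega
  have hf1 : (k/(8*R) + 1) % 2 = 1 - f := by omega
  rw [hf1]
  rcases (show e = 0 ∨ e = 1 by omega) with rfl | rfl <;>
    rcases (show f = 0 ∨ f = 1 by omega) with rfl | rfl <;>
    simp <;> omega

lemma rec2 (M k : ℕ) (hM : 4 ≤ M) (hk : k % 4 ≠ 0) : C M k = 4 * C (M-1) k := by
  unfold C
  have hR0 : 0 < 2^(M-4) := by positivity
  set R := 2^(M-4) with hR
  have h8R : 0 < 8*R := by positivity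
  have h16 : (2:ℕ)^M = 16*R := by
    rw [hR]
    conv_lhs => rw [show M = (M-4)+4 by omega]
    rw [pow_add]; ring
  have h8 : (2:ℕ)^(M-1) = 8*R := by
    rw [hR]
    conv_lhs => rw [show M-1 = (M-4)+3 by omega]
    rw [pow_add]; ring
  rw [h16, h8]
  set A := (Finset.range (8*R) ×ˢ Finset.range (8*R) ×ˢ Finset.range (8*R)).filter
      (fun v => (v.1^2+v.2.1^2+v.2.2^2) % (16*R) = k % (16*R)) with hA
  set B := (Finset.range (8*R) ×ˢ Finset.range (8*R) ×ˢ Finset.range (8*R)).filter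
      (fun v => (v.1^2+v.2.1^2+v.2.2^2) % (16*R) = (k + 8*R) % (16*R)) with hB
  have key : ∀ u v w a b c : ℕ,
      ((u + 8*R*a)^2 + (v + 8*R*b)^2 + (w + 8*R*c)^2) % (16*R) = (u^2+v^2+w^2) % (16*R) := by
    intro u v w a b c
    rw [show (u + 8*R*a)^2 + (v + 8*R*b)^2 + (w + 8*R*c)^2
        = (u^2+v^2+w^2) + (16*R)*(u*a + 4*R*a^2 + v*b + 4*R*b^2 + w*c + 4*R*c^2) by ring]
    exact Nat.add_mul_mod_self_left _ _ _
  have step1 : ((Finset.range (16*R) ×ˢ Finset.range (16*R) ×ˢ Finset.range (16*R)).filter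
      (fun v => (v.1^2 + v.2.1^2 + v.2.2^2) % (16*R) = k % (16*R))).card = 8 * A.card := by
    rw [show (8:ℕ) = ((Finset.range 2 ×ˢ Finset.range 2 ×ˢ Finset.range 2)).card by decide,
      ← Finset.card_product]
    apply Finset.card_nbij'
      (i := fun v => ((v.1/(8*R), v.2.1/(8*R), v.2.2/(8*R)),
                      (v.1 % (8*R), v.2.1 % (8*R), v.2.2 % (8*R))))
      (j := fun p => (p.2.1 + 8*R*p.1.1, p.2.2.1 + 8*R*p.1.2.1, p.2.2.2 + 8*R*p.1.2.2))
    · rintro ⟨x, y, z⟩ hv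
      simp only [Finset.mem_coe, Finset.mem_filter, Finset.mem_product, Finset.mem_range] at hv
      obtain ⟨⟨hx, hy, hz⟩, hs⟩ := hv
      simp only [hA, Finset.mem_coe, Finset.mem_filter, Finset.mem_product, Finset.mem_range]
      refine ⟨⟨?_, ?_, ?_⟩, ⟨Nat.mod_lt _ h8R, Nat.mod_lt _ h8R, Nat.mod_lt _ h8R⟩, ?_⟩
      · rw [Nat.div_lt_iff_lt_mul h8R]; omega
      · rw [Nat.div_lt_iff_lt_mul h8R]; omega
      · rw [Nat.div_lt_iff_lt_mul h8R]; omega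
      · have := sum_sq_mod (4*R) x y z
        rw [show 2*(4*R) = 8*R by ring, show 4*(4*R) = 16*R by ring] at this
        rw [this]; exact hs
    · rintro ⟨⟨a, b, c⟩, ⟨u, v, w⟩⟩ hp
      simp only [hA, Finset.mem_coe, Finset.mem_filter, Finset.mem_product, Finset.mem_range] at hp
      obtain ⟨⟨ha, hb, hc⟩, ⟨hu, hv, hw⟩, hs⟩ := hp
      simp only [Finset.mem_coe, Finset.mem_filter, Finset.mem_product, Finset.mem_range]
      have b1 : u + 8*R*a < 16*R := by
        have := Nat.mul_le_mul_left (8*R) (show a ≤ 1 by omega); omega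
      have b2 : v + 8*R*b < 16*R := by
        have := Nat.mul_le_mul_left (8*R) (show b ≤ 1 by omega); omega
      have b3 : w + 8*R*c < 16*R := by
        have := Nat.mul_le_mul_left (8*R) (show c ≤ 1 by omega); omega
      exact ⟨⟨b1, b2, b3⟩, by rw [key]; exact hs⟩
    · rintro ⟨x, y, z⟩ hv
      simp only [Prod.mk.injEq]
      exact ⟨Nat.mod_add_div x (8*R), Nat.mod_add_div y (8*R), Nat.mod_add_div z (8*R)⟩
    · rintro ⟨⟨a, b, c⟩, ⟨u, v, w⟩⟩ hp
      simp only [hA, Finset.mem_coe, Finset.mem_filter, Finset.mem_product, Finset.mem_range] at hp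
      obtain ⟨⟨ha, hb, hc⟩, ⟨hu, hv, hw⟩, hs⟩ := hp
      simp only [Prod.mk.injEq]
      have d1 : ∀ u a : ℕ, u < 8*R → a < 2 → (u + 8*R*a)/(8*R) = a := by
        intro u a hu ha
        rw [Nat.add_mul_div_left _ _ h8R, Nat.div_eq_of_lt hu]
        omega
      have d2 : ∀ u a : ℕ, u < 8*R → (u + 8*R*a) % (8*R) = u := by
        intro u a hu
        rw [Nat.add_mul_mod_self_left, Nat.mod_eq_of_lt hu]
      exact ⟨⟨d1 u a hu ha, d1 v b hv hb, d1 w c hw hc⟩,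
        d2 u a hu, d2 v b hv, d2 w c hw⟩
  have step2 : A.card = B.card := by
    apply Finset.card_nbij' (TT R) (TT R)
    · rintro ⟨x, y, z⟩ hv
      simp only [hA, Finset.mem_coe, Finset.mem_filter, Finset.mem_product, Finset.mem_range] at hv
      obtain ⟨⟨hx, hy, hz⟩, hs⟩ := hv
      have hodd := not_all_even R k x y z hk hs
      obtain ⟨t1, t2, t3⟩ := TT_bounds R x y z hR0 hx hy hz
      simp only [hB, Finset.mem_coe, Finset.mem_filter, Finset.mem_product, Finset.mem_range]
      refine ⟨⟨t1, t2, t3⟩, ?_⟩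
      rw [TT_sum R x y z hR0 hodd]
      exact shift_mod _ _ _ _ hs
    · rintro ⟨x, y, z⟩ hv
      simp only [hB, Finset.mem_coe, Finset.mem_filter, Finset.mem_product, Finset.mem_range] at hv
      obtain ⟨⟨hx, hy, hz⟩, hs⟩ := hv
      have hk8 : (k + 8*R) % 4 ≠ 0 := by
        rw [show k + 8*R = k + 4*(2*R) by ring, Nat.add_mul_mod_self_left]
        exact hk
      have hodd := not_all_even R (k + 8*R) x y z hk8 hs
      obtain ⟨t1, t2, t3⟩ := TT_bounds R x y z hR0 hx hy hz
      simp only [hA, Finset.mem_coe, Finset.mem_filter, Finset.mem_product, Finset.mem_range]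
      refine ⟨⟨t1, t2, t3⟩, ?_⟩
      rw [TT_sum R x y z hR0 hodd]
      rw [shift_mod _ _ _ _ hs, show k + 8*R + 8*R = k + 16*R by ring, Nat.add_mod_right]
    · rintro ⟨x, y, z⟩ hv
      simp only [hA, Finset.mem_coe, Finset.mem_filter, Finset.mem_product, Finset.mem_range] at hv
      exact TT_invol R x y z hR0 hv.1.1 hv.1.2.1 hv.1.2.2
    · rintro ⟨x, y, z⟩ hv
      simp only [hB, Finset.mem_coe, Finset.mem_filter, Finset.mem_product, Finset.mem_range] at hv
      exact TT_invol R x y z hR0 hv.1.1 hv.1.2.1 hv.1.2.2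
  have hne : k % (16*R) ≠ (k + 8*R) % (16*R) := by
    have e2 : k % (16*R) = k % (8*R) + 8*R*(k/(8*R) % 2) := by
      rw [show 16*R = 8*R*2 by ring]; exact Nat.mod_mul
    have e3 : (k + 8*R) % (16*R) = k % (8*R) + 8*R*((k/(8*R) + 1) % 2) := by
      rw [show 16*R = 8*R*2 by ring, Nat.mod_mul, Nat.add_mod_right, Nat.add_div_right _ h8R]
    intro h
    rw [e2, e3] at h
    generalize hG : k/(8*R) = g at h
    rcases Nat.mod_two_eq_zero_or_one g with h0 | h0
    · have h1 : (g+1) % 2 = 1 := by omega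
      rw [h0, h1] at h
      omega
    · have h1 : (g+1) % 2 = 0 := by omega
      rw [h0, h1] at h
      omega
  have hdisj : Disjoint A B := by
    rw [Finset.disjoint_left]
    rintro ⟨x, y, z⟩ haA haB
    simp only [hA, Finset.mem_filter, Finset.mem_product, Finset.mem_range] at haA
    simp only [hB, Finset.mem_filter, Finset.mem_product, Finset.mem_range] at haB
    exact hne (haA.2 ▸ haB.2)
  have step3 : A.card + B.card = ((Finset.range (8*R) ×ˢ Finset.range (8*R) ×ˢ
      Finset.range (8*R)).filter
      (fun v => (v.1^2 + v.2.1^2 + v.2.2^2) % (8*R) = k % (8*R))).card := by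
    rw [← Finset.card_union_of_disjoint hdisj, hA, hB, ← Finset.filter_or]
    congr 1
    apply Finset.filter_congr
    intro v hv
    exact mod_iff R _ k hR0
  omega

lemma main : ∀ M, 1 ≤ M → ∀ k, 2^M ∣ C M k := by
  intro M
  induction M using Nat.strong_induction_on with
  | _ M ih =>
    intro h1 k
    rcases le_or_gt M 3 with h | h
    · exact base M k h1 h
    · by_cases hk : k % 4 = 0
      · rw [rec4 M k (by omega) hk]
        obtain ⟨c, hc⟩ := ih (M-2) (by omega) (by omega) (k/4)
        refine ⟨2*c, ?_⟩
        have hp : (2:ℕ)^M = 2^(M-2)*4 := by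
          conv_lhs => rw [show M = (M-2)+2 by omega]
          rw [pow_add]; norm_num
        rw [hc, hp]; ring
      · rw [rec2 M k (by omega) hk]
        obtain ⟨c, hc⟩ := ih (M-1) (by omega) (by omega) k
        refine ⟨2*c, ?_⟩
        have hp : (2:ℕ)^M = 2^(M-1)*2 := by
          conv_lhs => rw [show M = (M-1)+1 by omega]
          rw [pow_add]; norm_num
        rw [hc, hp]; ring

theorem stmt_13 (m : ℕ) (hm : 1 ≤ m) (k : ZMod (2 ^ m)) :
    2 ^ m ∣ (Finset.univ.filter fun v : ZMod (2 ^ m) × ZMod (2 ^ m) × ZMod (2 ^ m) =>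
      v.1 ^ 2 + v.2.1 ^ 2 + v.2.2 ^ 2 = k).card := by
  haveI : NeZero (2^m) := ⟨by positivity⟩
  have hcard : (Finset.univ.filter fun v : ZMod (2 ^ m) × ZMod (2 ^ m) × ZMod (2 ^ m) =>
      v.1 ^ 2 + v.2.1 ^ 2 + v.2.2 ^ 2 = k).card = C m k.val := by
    unfold C
    refine Finset.card_nbij'
      (fun v : ZMod (2^m) × ZMod (2^m) × ZMod (2^m) => (v.1.val, v.2.1.val, v.2.2.val))
      (fun p : ℕ × ℕ × ℕ => ((p.1 : ZMod (2^m)), (p.2.1 : ZMod (2^m)), (p.2.2 : ZMod (2^m))))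
      ?_ ?_ ?_ ?_
    · intro v hv
      simp only [Finset.mem_coe, Finset.mem_filter, Finset.mem_univ, true_and] at hv
      simp only [Finset.mem_coe, Finset.mem_filter, Finset.mem_product, Finset.mem_range]
      refine ⟨⟨ZMod.val_lt _, ZMod.val_lt _, ZMod.val_lt _⟩, ?_⟩
      have h : ((v.1.val^2 + v.2.1.val^2 + v.2.2.val^2 : ℕ) : ZMod (2^m))
          = ((k.val : ℕ) : ZMod (2^m)) := by
        push_cast
        simp only [ZMod.natCast_val, ZMod.cast_id]
        exact hv
      rwa [ZMod.natCast_eq_natCast_iff] at h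
    · intro p hp
      simp only [Finset.mem_coe, Finset.mem_filter, Finset.mem_product, Finset.mem_range] at hp
      simp only [Finset.mem_coe, Finset.mem_filter, Finset.mem_univ, true_and]
      have h : ((p.1^2 + p.2.1^2 + p.2.2^2 : ℕ) : ZMod (2^m))
          = ((k.val : ℕ) : ZMod (2^m)) := by
        rw [ZMod.natCast_eq_natCast_iff]; exact hp.2
      push_cast at h
      simp only [ZMod.natCast_val, ZMod.cast_id] at h
      exact h
    · rintro ⟨a, b, c⟩ _
      simp [Prod.ext_iff, ZMod.natCast_val, ZMod.cast_id]
    · rintro ⟨a, b, c⟩ hp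
      simp only [Finset.mem_coe, Finset.mem_filter, Finset.mem_product, Finset.mem_range] at hp
      simp only [Prod.mk.injEq]
      exact ⟨ZMod.val_cast_of_lt hp.1.1, ZMod.val_cast_of_lt hp.1.2.1,
        ZMod.val_cast_of_lt hp.1.2.2⟩
  rw [hcard]
  exact main m hm k.val
end
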